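/- arXiv:1011.2593 — 3 statements merged into one kernel-verified Lean document; each statement's English description precedes it below -/
import Mathlib

section
/- Let p be a prime and e ≥ 1 an integer, and let G be a p-group of nilpotency class at most p−1 and exponent dividing p^e, presented as G = F/R with F a free group and R a normal subgroup; equivalently, γ_p(F) ≤ R and x^(p^e) ∈ R for every x ∈ F. Then for every g ∈ R ∩ ⁅F, F⁆, one has g^(p^e) ∈ ⁅R, F⁆; that is, the exponent of the Schur multiplier M(G) = (R ∩ ⁅F, F⁆)/⁅R, F⁆ divides exp(G). -/
open scoped commutatorElement

namespace SchurExp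

abbrev lowerCentralSeries (G : Type*) [Group G] (n : ℕ) : Subgroup G :=
  (⊤ : Subgroup G).lowerCentralSeries n

lemma lowerCentralSeries_zero {G : Type*} [Group G] : lowerCentralSeries G 0 = ⊤ := rfl

lemma lowerCentralSeries_one {G : Type*} [Group G] : lowerCentralSeries G 1 = commutator G := rfl

lemma lowerCentralSeries_succ {G : Type*} [Group G] (n : ℕ) :
    lowerCentralSeries G (n + 1) = Subgroup.closure {x | ∃ p ∈ lowerCentralSeries G n,
      ∃ q ∈ (⊤ : Subgroup G), p * q * p⁻¹ * q⁻¹ = x} := rfl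

lemma lowerCentralSeries_antitone {G : Type*} [Group G] : Antitone (lowerCentralSeries G) :=
  Subgroup.lowerCentralSeries_antitone _

instance lowerCentralSeries_normal {G : Type*} [Group G] (n : ℕ) :
    (lowerCentralSeries G n).Normal := by
  infer_instance


/-! Integer difference calculus -/

def Dz (ε : ℕ → ℤ) : ℕ → ℤ := fun n => ε (n+1) - ε n

lemma Dz_zero : Dz (fun _ => (0:ℤ)) = fun _ => (0:ℤ) := by funext n; simp [Dz]

lemma Dz_iter_zero (j : ℕ) : Dz^[j] (fun _ => (0:ℤ)) = fun _ => (0:ℤ) := by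
  induction j with
  | zero => rfl
  | succ j ih => rw [Function.iterate_succ_apply, Dz_zero, ih]

lemma Dz_choose (k : ℕ) :
    Dz (fun n => ((n.choose (k+1) : ℤ))) = fun n => ((n.choose k : ℤ)) := by
  funext n
  simp only [Dz, Nat.choose_succ_succ n k]
  push_cast; ring

lemma Dz_choose_zero : Dz (fun n => ((n.choose 0 : ℤ))) = fun _ => (0:ℤ) := by
  funext n; simp [Dz]

lemma Dz_iter_choose (k : ℕ) :
    Dz^[k+1] (fun n => ((n.choose k : ℤ))) = fun _ => (0:ℤ) := by
  induction k with
  | zero => rw [Function.iterate_one, Dz_choose_zero]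
  | succ k ih => rw [Function.iterate_succ_apply, Dz_choose, ih]

lemma Dz_neg (ε : ℕ → ℤ) : Dz (fun n => -(ε n)) = fun n => -(Dz ε n) := by
  funext n; simp [Dz]; ring

lemma Dz_iter_neg (j : ℕ) (ε : ℕ → ℤ) :
    Dz^[j] (fun n => -(ε n)) = fun n => -(Dz^[j] ε n) := by
  induction j generalizing ε with
  | zero => rfl
  | succ j ih => rw [Function.iterate_succ_apply, Function.iterate_succ_apply, Dz_neg, ih]



variable {H : Type*} [Group H]

def D (f : ℕ → H) : ℕ → H := fun n => (f n)⁻¹ * f (n+1)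

def shift (f : ℕ → H) : ℕ → H := fun n => f (n+1)

lemma D_iter_shift (j : ℕ) (f : ℕ → H) : D^[j] (shift f) = shift (D^[j] f) := by
  induction j generalizing f with
  | zero => rfl
  | succ j ih => rw [Function.iterate_succ_apply, Function.iterate_succ_apply]; exact ih (D f)

section Filtration

variable (G : ℕ → Subgroup H)

def Pt (j m : ℕ) (f : ℕ → H) : Prop :=
  ∀ k, k ≤ j → ∀ n, (D^[k] f) n ∈ G (m + k)

variable {G}

lemma Pt_of_le {j j' m : ℕ} {f : ℕ → H} (h : j' ≤ j) (hf : Pt G j m f) : Pt G j' m f :=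
  fun k hk n => hf k (hk.trans h) n

lemma Pt_val {j m : ℕ} {f : ℕ → H} (hf : Pt G j m f) (n : ℕ) : f n ∈ G m := by
  simpa using hf 0 (Nat.zero_le _) n

lemma Pt_D {j m : ℕ} {f : ℕ → H} (hf : Pt G (j+1) m f) : Pt G j (m+1) (D f) := by
  intro k hk n
  have h := hf (k+1) (Nat.succ_le_succ hk) n
  rw [Function.iterate_succ_apply] at h
  have harith : m + (k+1) = (m+1) + k := by omega
  rwa [harith] at h

lemma Pt_build {j m : ℕ} {f : ℕ → H} (h0 : ∀ n, f n ∈ G m) (hD : Pt G j (m+1) (D f)) :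
    Pt G (j+1) m f := by
  intro k hk n
  cases k with
  | zero => simpa using h0 n
  | succ k =>
      have h := hD k (Nat.lt_succ_iff.mp hk) n
      rw [Function.iterate_succ_apply]
      have harith : (m+1) + k = m + (k+1) := by omega
      rwa [harith] at h

lemma Pt_shift {j m : ℕ} {f : ℕ → H} (hf : Pt G j m f) : Pt G j m (shift f) := by
  intro k hk n
  rw [D_iter_shift]
  exact hf k hk (n+1)

section Master

variable (hanti : ∀ {a b : ℕ}, a ≤ b → G b ≤ G a)
variable (hcomm : ∀ a b (x y : H), x ∈ G a → y ∈ G b → ⁅x, y⁆ ∈ G (a+b))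

include hanti in
lemma Pt_mono {j m m' : ℕ} {f : ℕ → H} (h : m' ≤ m) (hf : Pt G j m f) : Pt G j m' f :=
  fun k hk n => hanti (by omega) (hf k hk n)

include hanti hcomm in
lemma master : ∀ j : ℕ,
    (∀ m (f g : ℕ → H), Pt G j m f → Pt G j m g → Pt G j m (fun n => f n * g n)) ∧
    (∀ m (f : ℕ → H), Pt G j m f → Pt G j m (fun n => (f n)⁻¹)) ∧
    (∀ m a b (u v : ℕ → H), m ≤ a + b → Pt G j a u → Pt G j b v →
      Pt G j m (fun n => ⁅u n, v n⁆)) := by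
  intro j
  induction j with
  | zero =>
      refine ⟨?_, ?_, ?_⟩
      · intro m f g hf hg k hk n
        interval_cases k
        simpa using (G m).mul_mem (Pt_val hf n) (Pt_val hg n)
      · intro m f hf k hk n
        interval_cases k
        simpa using (G m).inv_mem (Pt_val hf n)
      · intro m a b u v hm hu hv k hk n
        interval_cases k
        simpa using hanti hm (hcomm a b _ _ (Pt_val hu n) (Pt_val hv n))
  | succ j ih =>
      obtain ⟨A, B, C⟩ := ih
      -- conjugation helper at level j
      have CONJ : ∀ M ℓ (z g : ℕ → H), Pt G j M z → Pt G j ℓ g →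
          Pt G j M (fun n => g n * z n * (g n)⁻¹) := by
        intro M ℓ z g hz hg
        have hg0 : Pt G j 0 g := Pt_mono hanti (Nat.zero_le _) hg
        have hcz : Pt G j M (fun n => ⁅g n, z n⁆) :=
          C M 0 M g z (by omega) hg0 hz
        have := A M _ _ hcz hz
        have hid : (fun n => g n * z n * (g n)⁻¹) = fun n => ⁅g n, z n⁆ * z n := by
          funext n; simp only [commutatorElement_def]; group
        rwa [hid]
      refine ⟨?_, ?_, ?_⟩
      · -- product
        intro m f g hf hg
        refine Pt_build (fun n => (G m).mul_mem (Pt_val hf n) (Pt_val hg n)) ?_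
        have hDf := Pt_D hf
        have hDg := Pt_D hg
        have hginv := B m g (Pt_of_le (Nat.le_succ j) hg)
        have hq : Pt G j (m+1) (fun n => ⁅(g n)⁻¹, D f n⁆) :=
          C (m+1) m (m+1) _ _ (by omega) hginv hDf
        have hid : D (fun n => f n * g n)
            = fun n => (⁅(g n)⁻¹, D f n⁆ * D f n) * D g n := by
          funext n; simp [D, commutatorElement_def]; group
        rw [hid]
        exact A (m+1) _ _ (A (m+1) _ _ hq hDf) hDg
      · -- inverse
        intro m f hf
        refine Pt_build (fun n => (G m).inv_mem (Pt_val hf n)) ?_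
        have hDf := Pt_D hf
        have hDfinv := B (m+1) _ hDf
        have hq : Pt G j (m+1) (fun n => ⁅f n, (D f n)⁻¹⁆) :=
          C (m+1) m (m+1) _ _ (by omega) (Pt_of_le (Nat.le_succ j) hf) hDfinv
        have hid : D (fun n => (f n)⁻¹)
            = fun n => ⁅f n, (D f n)⁻¹⁆ * (D f n)⁻¹ := by
          funext n; simp [D, commutatorElement_def]; group
        rw [hid]
        exact A (m+1) _ _ hq hDfinv
      · -- commutator
        intro m a b u v hm hu hv
        refine Pt_build
          (fun n => hanti hm (hcomm a b _ _ (Pt_val hu n) (Pt_val hv n))) ?_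
        have hu' := Pt_of_le (Nat.le_succ j) hu
        have hv' := Pt_of_le (Nat.le_succ j) hv
        have hDu := Pt_D hu
        have hDv := Pt_D hv
        have hq1 : Pt G j (m+1) (fun n => ⁅D u n, v n⁆) :=
          C (m+1) (a+1) b _ _ (by omega) hDu hv'
        have hW : Pt G j (m+1) (fun n => u n * ⁅D u n, v n⁆ * (u n)⁻¹) :=
          CONJ (m+1) a _ u hq1 hu'
        have hK' : Pt G j (a+b) (fun n => ⁅v n, u n⁆) :=
          C (a+b) b a v u (by omega) hv' hu'
        have hP2 : Pt G j (m+1)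
            (fun n => ⁅⁅v n, u n⁆, u n * ⁅D u n, v n⁆ * (u n)⁻¹⁆) :=
          C (m+1) (a+b) (m+1) _ _ (by omega) hK' hW
        have hq3 : Pt G j (m+1) (fun n => ⁅shift u n, D v n⁆) :=
          C (m+1) a (b+1) _ _ (by omega) (Pt_shift hu') hDv
        have hP4 : Pt G j (m+1) (fun n => v n * ⁅shift u n, D v n⁆ * (v n)⁻¹) :=
          CONJ (m+1) b _ v hq3 hv'
        have hid : D (fun n => ⁅u n, v n⁆)
            = fun n => (⁅⁅v n, u n⁆, u n * ⁅D u n, v n⁆ * (u n)⁻¹⁆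
                * (u n * ⁅D u n, v n⁆ * (u n)⁻¹))
                * (v n * ⁅shift u n, D v n⁆ * (v n)⁻¹) := by
          funext n; simp [D, shift, commutatorElement_def]; group
        rw [hid]
        exact A (m+1) _ _ (A (m+1) _ _ hP2 hW) hP4

def Pl (G : ℕ → Subgroup H) (m : ℕ) (f : ℕ → H) : Prop := ∀ j, Pt G j m f

lemma Pl_val {m : ℕ} {f : ℕ → H} (hf : Pl G m f) (n : ℕ) : f n ∈ G m := by
  simpa using hf 0 0 (Nat.zero_le _) n

/-- the atom sequences -/
lemma D_atom (a : H) (ε : ℕ → ℤ) :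
    D (fun n => a ^ ε n) = fun n => a ^ (Dz ε n) := by
  funext n
  simp only [D, Dz, zpow_sub]
  group

lemma D_iter_atom (j : ℕ) (a : H) (ε : ℕ → ℤ) :
    D^[j] (fun n => a ^ ε n) = fun n => a ^ (Dz^[j] ε n) := by
  induction j generalizing ε with
  | zero => rfl
  | succ j ih =>
      rw [Function.iterate_succ_apply, Function.iterate_succ_apply, D_atom]
      exact ih (Dz ε)

include hanti in
lemma atom_Pl {a : H} {w : ℕ} (ha : a ∈ G w) {ε : ℕ → ℤ}
    (hε : Dz^[w+1] ε = fun _ => 0) : Pl G 0 (fun n => a ^ ε n) := by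
  intro j k hk n
  rw [D_iter_atom]
  rcases le_or_gt k w with h | h
  · exact hanti (by omega) (Subgroup.zpow_mem _ ha _)
  · have : Dz^[k] ε = fun _ => 0 := by
      have hdec : k = (k - (w+1)) + (w+1) := by omega
      rw [hdec, Function.iterate_add_apply, hε, Dz_iter_zero]
    rw [this]
    simpa using Subgroup.one_mem _

omit hanti in
/-- key vanishing lemma -/
lemma keyvan {f : ℕ → H} (hf : Pl G 0 f) {k : ℕ} (hv : ∀ i, i < k → f i = 1) :
    f k ∈ G k := by
  have claim1 : ∀ j i, i + j < k → D^[j] f i = 1 := by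
    intro j
    induction j with
    | zero => intro i hi; exact hv i (by omega)
    | succ j ih =>
        intro i hi
        rw [Function.iterate_succ_apply', D]
        rw [ih i (by omega), ih (i+1) (by omega)]
        simp
  have claim2 : ∀ j, j ≤ k → D^[j] f (k - j) = f k := by
    intro j
    induction j with
    | zero => intro _; simp
    | succ j ih =>
        intro hj
        rw [Function.iterate_succ_apply', D]
        have e1 : D^[j] f (k - (j+1)) = 1 := claim1 j (k - (j+1)) (by omega)
        have e2 : k - (j+1) + 1 = k - j := by omega
        rw [e1, e2, ih (by omega)]
        simp
  have : D^[k] f (k - k) = f k := claim2 k le_rfl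
  rw [Nat.sub_self] at this
  rw [← this]
  simpa using hf k k le_rfl 0



include hanti hcomm in
lemma Pl_mul {m : ℕ} {f g : ℕ → H} (hf : Pl G m f) (hg : Pl G m g) :
    Pl G m (fun n => f n * g n) :=
  fun j => (master hanti hcomm j).1 m f g (hf j) (hg j)

include hanti hcomm in
lemma Pl_inv {m : ℕ} {f : ℕ → H} (hf : Pl G m f) :
    Pl G m (fun n => (f n)⁻¹) :=
  fun j => (master hanti hcomm j).2.1 m f (hf j)

include hanti hcomm in
theorem taylor {c : ℕ} (hbot : G (c+1) = ⊥) (f : ℕ → H) (hf : Pl G 0 f)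
    (h0 : f 0 = 1) (h1 : f 1 = 1) :
    ∃ aa : ℕ → H, (∀ k, aa k ∈ G k) ∧ aa 0 = 1 ∧ aa 1 = 1 ∧
      ∀ n, f n = ((List.range (c+1)).map (fun k => (aa k) ^ (n.choose k))).prod := by
  classical
  let rseq : ℕ → (ℕ → H) := fun k =>
    Nat.rec f (fun k r => fun n => (r k) ^ (-(n.choose k : ℤ)) * r n) k
  have hr0 : rseq 0 = f := rfl
  have hrs : ∀ k n, rseq (k+1) n = (rseq k k) ^ (-(n.choose k : ℤ)) * rseq k n :=
    fun k n => rfl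
  have hJ : ∀ k, Pl G 0 (rseq k) ∧ (∀ i, i < k → rseq k i = 1) := by
    intro k
    induction k with
    | zero => exact ⟨hr0 ▸ hf, fun i hi => absurd hi (Nat.not_lt_zero i)⟩
    | succ k ih =>
        obtain ⟨hP, hV⟩ := ih
        have hak : rseq k k ∈ G k := keyvan hP hV
        have hatom : Pl G 0 (fun n => (rseq k k) ^ (-(n.choose k : ℤ))) := by
          refine atom_Pl hanti hak ?_
          rw [Dz_iter_neg, Dz_iter_choose]
          funext n; simp
        refine ⟨?_, ?_⟩
        · have := Pl_mul hanti hcomm hatom hP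
          convert this using 2
        · intro i hi
          rw [hrs k i]
          rcases lt_or_eq_of_le (Nat.lt_succ_iff.mp hi) with h | h
          · rw [Nat.choose_eq_zero_of_lt h, hV i h]; simp
          · subst h
            rw [Nat.choose_self]
            simp
  set aa : ℕ → H := fun k => rseq k k with haa
  have haamem : ∀ k, aa k ∈ G k := fun k => keyvan (hJ k).1 (hJ k).2
  have haa0 : aa 0 = 1 := h0
  have haa1 : aa 1 = 1 := by
    show (f 0) ^ (-((1:ℕ).choose 0 : ℤ)) * f 1 = 1
    rw [h0, h1]; simp
  have hdec : ∀ k n,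
      f n = ((List.range k).map (fun i => (aa i) ^ (n.choose i))).prod * rseq k n := by
    intro k
    induction k with
    | zero => intro n; simp [hr0]
    | succ k ih =>
        intro n
        rw [List.range_succ, List.map_append, List.prod_append, ih n, hrs k n]
        simp only [List.map_cons, List.map_nil, List.prod_cons, List.prod_nil, mul_one]
        rw [mul_assoc]
        congr 1
        rw [← mul_assoc]
        have : (aa k) ^ (n.choose k) * (rseq k k) ^ (-(n.choose k : ℤ)) = 1 := by
          rw [haa]
          rw [← zpow_natCast (rseq k k) (n.choose k), ← zpow_add]
          simp
        rw [this, one_mul]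
  have hfin : ∀ n, rseq (c+1) n = 1 := by
    intro n
    induction n using Nat.strong_induction_on with
    | _ n IH =>
        rcases lt_or_ge n (c+1) with h | h
        · exact (hJ (c+1)).2 n h
        · have hmem : rseq (c+1) n ∈ G n := keyvan (hJ (c+1)).1 IH
          have hle : G n ≤ G (c+1) := hanti h
          rw [hbot] at hle
          simpa using hle hmem
  refine ⟨aa, haamem, haa0, haa1, fun n => ?_⟩
  have := hdec (c+1) n
  rwa [hfin n, mul_one] at this

include hanti hcomm in
theorem prodTaylor {c : ℕ} (hbot : G (c+1) = ⊥) (x y : H)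
    (hx : x ∈ G 1) (hy : y ∈ G 1) :
    ∃ aa : ℕ → H, (∀ k, aa k ∈ G k) ∧ aa 0 = 1 ∧ aa 1 = 1 ∧
      ∀ n, (x*y) ^ n = x ^ n * y ^ n *
        ((List.range (c+1)).map (fun k => (aa k) ^ (n.choose k))).prod := by
  have hpow : ∀ g : H, g ∈ G 1 → Pl G 0 (fun n => g ^ (n : ℤ)) := by
    intro g hg
    refine atom_Pl hanti hg ?_
    have h1 : Dz (fun n => ((n : ℤ))) = fun _ => 1 := by
      funext n; simp [Dz]
    rw [Function.iterate_succ_apply, h1]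
    funext n; simp [Dz]
  have hf : Pl G 0 (fun n => (y⁻¹) ^ (n:ℤ) * (x⁻¹) ^ (n:ℤ) * (x*y) ^ (n:ℤ)) := by
    have := Pl_mul hanti hcomm
      (Pl_mul hanti hcomm (hpow _ (Subgroup.inv_mem _ hy)) (hpow _ (Subgroup.inv_mem _ hx)))
      (hpow _ (Subgroup.mul_mem _ hx hy))
    convert this using 2
  obtain ⟨aa, hmem, h0, h1, heq⟩ := taylor hanti hcomm hbot _ hf (by simp)
    (by simp only [Nat.cast_one, zpow_one]; group)
  refine ⟨aa, hmem, h0, h1, fun n => ?_⟩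
  have h := heq n
  simp only [zpow_natCast] at h
  rw [← h]
  simp only [inv_pow]
  group

end Master

end Filtration



lemma hallWitt (x y z : H) :
    (x * ⁅⁅x⁻¹,y⁆,z⁆ * x⁻¹) * (z * ⁅⁅z⁻¹,x⁆,y⁆ * z⁻¹) * (y * ⁅⁅y⁻¹,z⁆,x⁆ * y⁻¹) = 1 := by
  simp only [commutatorElement_def]; group

/-- Three subgroups lemma -/
lemma threeSubgroups {A B C N : Subgroup H} [hN : N.Normal]
    (h1 : ⁅⁅A, B⁆, C⁆ ≤ N) (h2 : ⁅⁅C, A⁆, B⁆ ≤ N) : ⁅⁅B, C⁆, A⁆ ≤ N := by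
  rw [Subgroup.commutator_le]
  intro u hu a ha
  revert hu
  have key : ∀ u ∈ ⁅B, C⁆, ⁅u, a⁆ ∈ N := by
    intro u hu
    rw [Subgroup.commutator_def] at hu
    induction hu using Subgroup.closure_induction with
    | mem g hg =>
        obtain ⟨b, hb, c, hc, rfl⟩ := hg
        -- Hall-Witt with x := a, y := b⁻¹, z := c
        have hw := hallWitt a b⁻¹ c
        have e1 : ⁅⁅a⁻¹, b⁻¹⁆, c⁆ ∈ N := h1 (Subgroup.commutator_mem_commutator
          (Subgroup.commutator_mem_commutator (A.inv_mem ha) (B.inv_mem hb)) hc)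
        have e2 : ⁅⁅c⁻¹, a⁆, b⁻¹⁆ ∈ N := h2 (Subgroup.commutator_mem_commutator
          (Subgroup.commutator_mem_commutator (C.inv_mem hc) ha) (B.inv_mem hb))
        have hmem : b⁻¹ * ⁅⁅(b⁻¹)⁻¹, c⁆, a⁆ * (b⁻¹)⁻¹ ∈ N := by
          have heq : (b⁻¹) * ⁅⁅(b⁻¹)⁻¹,c⁆,a⁆ * (b⁻¹)⁻¹
              = ((a * ⁅⁅a⁻¹,b⁻¹⁆,c⁆ * a⁻¹) * (c * ⁅⁅c⁻¹,a⁆,b⁻¹⁆ * c⁻¹))⁻¹ :=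
            eq_inv_of_mul_eq_one_right hw
          rw [heq]
          exact N.inv_mem (N.mul_mem (hN.conj_mem _ e1 a) (hN.conj_mem _ e2 c))
        have := hN.conj_mem _ hmem b
        simpa [mul_assoc] using this
    | one => simpa using N.one_mem
    | mul g₁ g₂ hg₁ hg₂ ih₁ ih₂ =>
        have hid : ⁅g₁ * g₂, a⁆ = g₁ * ⁅g₂, a⁆ * g₁⁻¹ * ⁅g₁, a⁆ := by
          simp only [commutatorElement_def]; group
        rw [hid]
        exact N.mul_mem (hN.conj_mem _ ih₂ g₁) ih₁
    | inv g hg ih =>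
        have hid : ⁅g⁻¹, a⁆ = g⁻¹ * ⁅g, a⁆⁻¹ * g := by
          simp only [commutatorElement_def]; group
        rw [hid]
        have := hN.conj_mem _ (N.inv_mem ih) g⁻¹
        simpa [mul_assoc] using this
  exact fun hu => key u hu

lemma lcs_comm_lcs : ∀ n m : ℕ,
    ⁅lowerCentralSeries H m, lowerCentralSeries H n⁆ ≤ lowerCentralSeries H (m + n + 1) := by
  intro n
  induction n with
  | zero =>
      intro m
      exact le_of_eq rfl
  | succ n ih =>
      intro m
      have hflip : ⁅lowerCentralSeries H m, lowerCentralSeries H (n+1)⁆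
          = ⁅⁅lowerCentralSeries H n, (⊤ : Subgroup H)⁆, lowerCentralSeries H m⁆ := by
        rw [Subgroup.commutator_comm]
        rfl
      rw [hflip]
      refine threeSubgroups ?_ ?_
      · have h := Subgroup.commutator_mono (ih m) (le_refl (⊤ : Subgroup H))
        have e : ⁅lowerCentralSeries H (m+n+1), (⊤ : Subgroup H)⁆
            = lowerCentralSeries H (m+n+2) := rfl
        rw [e] at h
        have harith : m + (n+1) + 1 = m+n+2 := by omega
        rw [harith]
        exact h
      · have e0 : ⁅(⊤ : Subgroup H), lowerCentralSeries H m⁆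
            = lowerCentralSeries H (m+1) := by
          rw [Subgroup.commutator_comm]; rfl
        rw [e0]
        have h := ih (m+1)
        have harith : m + (n+1) + 1 = (m+1)+n+1 := by omega
        rw [harith]
        exact h

lemma lcs_comm_mem {m n : ℕ} {x y : H}
    (hx : x ∈ lowerCentralSeries H m) (hy : y ∈ lowerCentralSeries H n) :
    ⁅x, y⁆ ∈ lowerCentralSeries H (m + n + 1) :=
  lcs_comm_lcs n m (Subgroup.commutator_mem_commutator hx hy)

lemma lcs_map_surjective {H' : Type*} [Group H'] (f : H →* H') (hf : Function.Surjective f) :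
    ∀ n, Subgroup.map f (lowerCentralSeries H n) = lowerCentralSeries H' n := by
  intro n
  induction n with
  | zero =>
      simp only [lowerCentralSeries_zero]
      exact Subgroup.map_top_of_surjective f hf
  | succ n ih =>
      show Subgroup.map f ⁅lowerCentralSeries H n, ⊤⁆ = ⁅lowerCentralSeries H' n, ⊤⁆
      rw [Subgroup.map_commutator, ih, Subgroup.map_top_of_surjective f hf]


/-! ### Application: torsion of commutators -/

lemma pe_dvd_choose {p e k : ℕ} (hp : p.Prime) (hk : 1 ≤ k) (hkp : ¬ p ∣ k) :
    p ^ e ∣ (p ^ e).choose k := by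
  have hpos : 0 < p ^ e := Nat.pow_pos hp.pos
  have key := Nat.add_one_mul_choose_eq (p ^ e - 1) (k - 1)
  rw [show p ^ e - 1 + 1 = p ^ e by omega, show k - 1 + 1 = k by omega] at key
  have hdvd : p ^ e ∣ (p ^ e).choose k * k := ⟨_, key.symm⟩
  have hcop : Nat.Coprime (p ^ e) k :=
    Nat.Coprime.pow_left e ((Nat.Prime.coprime_iff_not_dvd hp).mpr hkp)
  exact hcop.dvd_of_dvd_mul_right hdvd

section Torsion

variable {Q : Type*} [Group Q]

lemma prodlem {p e i : ℕ} (hp : p.Prime) (hi : 2 ≤ i)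
    (hQbot : lowerCentralSeries Q p = ⊥)
    (IH : ∀ i', i < i' → ∀ x ∈ lowerCentralSeries Q (i'-1), x ^ (p^e) = 1)
    {x y : Q} (hx : x ∈ lowerCentralSeries Q (i-1)) (hy : y ∈ lowerCentralSeries Q (i-1))
    (hxn : x ^ (p^e) = 1) (hyn : y ^ (p^e) = 1) : (x*y) ^ (p^e) = 1 := by
  have hp2 : 2 ≤ p := hp.two_le
  set G : ℕ → Subgroup Q := fun j => lowerCentralSeries Q (i*j - 1) with hG
  have hanti : ∀ {a b : ℕ}, a ≤ b → G b ≤ G a := by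
    intro a b hab
    refine lowerCentralSeries_antitone ?_
    have := Nat.mul_le_mul (le_refl i) hab
    omega
  have hcomm : ∀ a b (u v : Q), u ∈ G a → v ∈ G b → ⁅u, v⁆ ∈ G (a+b) := by
    intro a b u v hu hv
    have hmem := lcs_comm_mem hu hv
    refine lowerCentralSeries_antitone ?_ hmem
    have h3 : i*(a+b) = i*a + i*b := Nat.mul_add i a b
    generalize i*(a+b) = r at *
    generalize i*a = s at *
    generalize i*b = t at *
    omega
  have hbot : G (p+1) = ⊥ := by
    have h2 : 2*(p+1) ≤ i*(p+1) := Nat.mul_le_mul hi (le_refl (p+1))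
    have hle : p ≤ i*(p+1) - 1 := by
      generalize i*(p+1) = t at *
      omega
    have h := lowerCentralSeries_antitone hle (G := Q)
    rw [hQbot] at h
    exact le_bot_iff.mp h
  have hG1 : G 1 = lowerCentralSeries Q (i-1) := by
    show lowerCentralSeries Q (i*1 - 1) = _
    rw [Nat.mul_one]
  obtain ⟨aa, hmem, h0, h1, heq⟩ := prodTaylor hanti hcomm hbot x y
    (by rw [hG1]; exact hx) (by rw [hG1]; exact hy)
  have hformula := heq (p^e)
  rw [hxn, hyn, one_mul, one_mul] at hformula
  rw [hformula]
  apply List.prod_eq_one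
  intro z hz
  simp only [List.mem_map, List.mem_range] at hz
  obtain ⟨k, hk, rfl⟩ := hz
  rcases Nat.lt_or_ge k 2 with hk2 | hk2
  · interval_cases k
    · rw [h0, one_pow]
    · rw [h1, one_pow]
  · by_cases hdk : p ∣ k
    · have hkp : k = p := Nat.le_antisymm (by omega) (Nat.le_of_dvd (by omega) hdk)
      have h2 : 2*k ≤ i*k := Nat.mul_le_mul hi (le_refl k)
      have hle : p ≤ i*k - 1 := by
        generalize i*k = t at *
        omega
      have hzz : aa k ∈ lowerCentralSeries Q p := lowerCentralSeries_antitone hle (hmem k)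
      rw [hQbot] at hzz
      rw [Subgroup.mem_bot.mp hzz, one_pow]
    · have hik : i < i*k := by
        have h2 : i*2 ≤ i*k := Nat.mul_le_mul (le_refl i) hk2
        have h3 : i*2 = i + i := by ring
        generalize i*k = t at *
        omega
      have htors : aa k ^ (p^e) = 1 := IH (i*k) hik (aa k) (hmem k)
      obtain ⟨t, ht⟩ := pe_dvd_choose hp (by omega) hdk
      rw [ht, pow_mul, htors, one_pow]

lemma genlem {p e i : ℕ} (hp : p.Prime) (hi : 2 ≤ i)
    (hQbot : lowerCentralSeries Q p = ⊥)
    (hcent : ∀ x q : Q, ⁅x ^ (p^e), q⁆ = 1)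
    (IH : ∀ i', i < i' → ∀ x ∈ lowerCentralSeries Q (i'-1), x ^ (p^e) = 1)
    {z q : Q} (hz : z ∈ lowerCentralSeries Q (i-2)) : ⁅z⁻¹, q⁆ ^ (p^e) = 1 := by
  have hp2 : 2 ≤ p := hp.two_le
  set w : Q := ⁅z⁻¹, q⁆ with hwdef
  have hzinv : z⁻¹ ∈ lowerCentralSeries Q (i-2) := Subgroup.inv_mem _ hz
  have hwmem : w ∈ lowerCentralSeries Q (i-1) := by
    have hq0 : q ∈ lowerCentralSeries Q 0 := by
      rw [lowerCentralSeries_zero]; trivial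
    have h := lcs_comm_mem hzinv hq0
    have harith : (i-2) + 0 + 1 = i - 1 := by omega
    rwa [harith] at h
  set H₀ : Subgroup Q := Subgroup.closure {z, w} with hH₀
  have hz0 : z ∈ H₀ := Subgroup.subset_closure (by simp)
  have hw0 : w ∈ H₀ := Subgroup.subset_closure (by simp)
  have hH₀le : H₀ ≤ lowerCentralSeries Q (i-2) := by
    rw [hH₀, Subgroup.closure_le]
    intro g hg
    simp only [Set.mem_insert_iff, Set.mem_singleton_iff] at hg
    rcases hg with rfl | rfl
    · exact hz
    · exact lowerCentralSeries_antitone (by omega) hwmem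
  set T : Subgroup Q := lowerCentralSeries Q ((i-2) + (i-1) + 1) with hT
  have hTnormal : T.Normal := lowerCentralSeries_normal _
  have step1 : ∀ k ∈ H₀, ⁅z, k⁆ ∈ T ∧ ⁅w, k⁆ ∈ T := by
    intro k hk
    rw [hH₀] at hk
    induction hk using Subgroup.closure_induction with
    | mem g hg =>
        simp only [Set.mem_insert_iff, Set.mem_singleton_iff] at hg
        rcases hg with rfl | rfl
        · refine ⟨?_, ?_⟩
          · rw [commutatorElement_self]; exact T.one_mem
          · have h := lcs_comm_mem hwmem hz
            have harith : (i-1) + (i-2) + 1 = (i-2) + (i-1) + 1 := by omega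
            rwa [harith] at h
        · refine ⟨?_, ?_⟩
          · exact lcs_comm_mem hz hwmem
          · rw [commutatorElement_self]; exact T.one_mem
    | one =>
        refine ⟨?_, ?_⟩ <;> · rw [commutatorElement_one_right]; exact T.one_mem
    | mul k₁ k₂ hk₁ hk₂ ih₁ ih₂ =>
        have hid : ∀ g : Q, ⁅g, k₁ * k₂⁆ = ⁅g, k₁⁆ * (k₁ * ⁅g, k₂⁆ * k₁⁻¹) := by
          intro g; simp only [commutatorElement_def]; group
        refine ⟨?_, ?_⟩
        · rw [hid z]; exact T.mul_mem ih₁.1 (hTnormal.conj_mem _ ih₂.1 k₁)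
        · rw [hid w]; exact T.mul_mem ih₁.2 (hTnormal.conj_mem _ ih₂.2 k₁)
    | inv k hk ih =>
        have hid : ∀ g : Q, ⁅g, k⁻¹⁆ = k⁻¹ * ⁅g, k⁆⁻¹ * k := by
          intro g; simp only [commutatorElement_def]; group
        refine ⟨?_, ?_⟩
        · rw [hid z]
          simpa [mul_assoc] using hTnormal.conj_mem _ (T.inv_mem ih.1) k⁻¹
        · rw [hid w]
          simpa [mul_assoc] using hTnormal.conj_mem _ (T.inv_mem ih.2) k⁻¹
  have hcommH : ∀ g ∈ H₀, ∀ k ∈ H₀, ⁅g, k⁆ ∈ T := by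
    intro g hg
    rw [hH₀] at hg
    induction hg using Subgroup.closure_induction with
    | mem g hgmem =>
        intro k hk
        simp only [Set.mem_insert_iff, Set.mem_singleton_iff] at hgmem
        rcases hgmem with rfl | rfl
        · exact (step1 k hk).1
        · exact (step1 k hk).2
    | one =>
        intro k hk
        rw [commutatorElement_one_left]; exact T.one_mem
    | mul g₁ g₂ hg₁ hg₂ ih₁ ih₂ =>
        intro k hk
        have hid : ⁅g₁ * g₂, k⁆ = (g₁ * ⁅g₂, k⁆ * g₁⁻¹) * ⁅g₁, k⁆ := by
          simp only [commutatorElement_def]; group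
        rw [hid]
        exact T.mul_mem (hTnormal.conj_mem _ (ih₂ k hk) g₁) (ih₁ k hk)
    | inv g hg ih =>
        intro k hk
        have hid : ⁅g⁻¹, k⁆ = g⁻¹ * ⁅g, k⁆⁻¹ * g := by
          simp only [commutatorElement_def]; group
        rw [hid]
        simpa [mul_assoc] using hTnormal.conj_mem _ (T.inv_mem (ih k hk)) g⁻¹
  have htop : Subgroup.map H₀.subtype ⊤ = H₀ := by
    rw [← MonoidHom.range_eq_map, Subgroup.range_subtype]
  have hHsub : ∀ j : ℕ, 1 ≤ j →
      Subgroup.map H₀.subtype (lowerCentralSeries H₀ j) ≤ lowerCentralSeries Q ((j+1)*(i-1)) := by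
    intro j hj
    induction j with
    | zero => omega
    | succ j ihj =>
        rcases Nat.eq_zero_or_pos j with rfl | hjpos
        · show Subgroup.map H₀.subtype ⁅lowerCentralSeries H₀ 0, ⊤⁆ ≤ _
          rw [lowerCentralSeries_zero, Subgroup.map_commutator, htop]
          rw [Subgroup.commutator_le]
          intro g hg k hk
          refine lowerCentralSeries_antitone ?_ (hcommH g hg k hk)
          omega
        · show Subgroup.map H₀.subtype ⁅lowerCentralSeries H₀ j, ⊤⁆ ≤ _
          rw [Subgroup.map_commutator, htop]
          have hmono := Subgroup.commutator_mono (ihj hjpos) hH₀le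
          have hstep := le_trans hmono (lcs_comm_lcs (i-2) ((j+1)*(i-1)))
          refine le_trans hstep (lowerCentralSeries_antitone ?_)
          have h3 : (j+1+1)*(i-1) = (j+1)*(i-1) + (i-1) := by ring
          generalize (j+1)*(i-1) = s at *
          generalize (j+1+1)*(i-1) = r at *
          omega
  have hbotH : lowerCentralSeries H₀ p = ⊥ := by
    have h := hHsub p (by omega)
    have hle : p ≤ (p+1)*(i-1) := by
      have h2 : (p+1)*1 ≤ (p+1)*(i-1) := Nat.mul_le_mul (le_refl (p+1)) (by omega)
      rw [Nat.mul_one] at h2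
      omega
    have h' := lowerCentralSeries_antitone hle (G := Q)
    rw [hQbot] at h'
    have hb : Subgroup.map H₀.subtype (lowerCentralSeries H₀ p) = ⊥ :=
      le_bot_iff.mp (le_trans h h')
    rw [Subgroup.map_eq_bot_iff, Subgroup.ker_subtype, le_bot_iff] at hb
    exact hb
  -- Taylor machinery inside H₀
  set G' : ℕ → Subgroup H₀ := fun j => lowerCentralSeries H₀ (j-1) with hG'
  have hanti' : ∀ {a b : ℕ}, a ≤ b → G' b ≤ G' a := by
    intro a b hab
    exact lowerCentralSeries_antitone (by omega)
  have hcomm' : ∀ a b (u v : H₀), u ∈ G' a → v ∈ G' b → ⁅u, v⁆ ∈ G' (a+b) := by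
    intro a b u v hu hv
    exact lowerCentralSeries_antitone (by omega) (lcs_comm_mem hu hv)
  have hbot' : G' (p+1) = ⊥ := by
    show lowerCentralSeries H₀ ((p+1)-1) = ⊥
    rw [show (p+1)-1 = p by omega]
    exact hbotH
  obtain ⟨aa, hmem, h0, h1, heq⟩ := prodTaylor hanti' hcomm' hbot'
    (⟨z, hz0⟩ : H₀) (⟨w, hw0⟩ : H₀)
    (by show _ ∈ lowerCentralSeries H₀ (1-1); rw [show (1:ℕ)-1 = 0 by omega]; exact Subgroup.mem_top _)
    (by show _ ∈ lowerCentralSeries H₀ (1-1); rw [show (1:ℕ)-1 = 0 by omega]; exact Subgroup.mem_top _)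
  have hformula := congrArg (H₀.subtype) (heq (p^e))
  simp only [map_pow, map_mul, map_list_prod, List.map_map] at hformula
  have hcoe : H₀.subtype (⟨z, hz0⟩ : H₀) = z := rfl
  have hcoew : H₀.subtype (⟨w, hw0⟩ : H₀) = w := rfl
  -- rewrite the list entries
  have hlist : (List.map (H₀.subtype ∘ fun k => aa k ^ (p^e).choose k) (List.range (p+1)))
      = List.map (fun k => (H₀.subtype (aa k)) ^ (p^e).choose k) (List.range (p+1)) := by
    refine List.map_congr_left ?_
    intro k _
    simp [Function.comp, map_pow]
  rw [hcoe, hcoew, hlist] at hformula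
  -- left side: (z*w)^(p^e) = z^(p^e)
  have hzw : z * w = q * z * q⁻¹ := by
    rw [hwdef]; simp only [commutatorElement_def]; group
  have hlhs : (z * w) ^ (p^e) = z ^ (p^e) := by
    rw [hzw, conj_pow]
    have hc : Commute (z ^ (p^e)) q :=
      commutatorElement_eq_one_iff_commute.mp (hcent z q)
    rw [← hc.eq]
    group
  rw [hlhs] at hformula
  -- conclude w ^ (p^e) * L = 1
  have hL : (List.map (fun k => (H₀.subtype (aa k)) ^ (p^e).choose k) (List.range (p+1))).prod
      = 1 := by
    apply List.prod_eq_one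
    intro t ht
    simp only [List.mem_map, List.mem_range] at ht
    obtain ⟨k, hk, rfl⟩ := ht
    rcases Nat.lt_or_ge k 2 with hk2 | hk2
    · interval_cases k
      · rw [h0]; simp
      · rw [h1]; simp
    · have hpush : H₀.subtype (aa k) ∈ lowerCentralSeries Q (k*(i-1)) := by
        have hmm : aa k ∈ lowerCentralSeries H₀ (k-1) := hmem k
        have := hHsub (k-1) (by omega) (Subgroup.mem_map_of_mem _ hmm)
        rwa [show (k-1+1) = k by omega] at this
      by_cases hdk : p ∣ k
      · have hkp : k = p := Nat.le_antisymm (by omega) (Nat.le_of_dvd (by omega) hdk)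
        have h2 : p*1 ≤ k*(i-1) := by
          rw [hkp]; exact Nat.mul_le_mul (le_refl p) (by omega)
        rw [Nat.mul_one] at h2
        have hzz : H₀.subtype (aa k) ∈ lowerCentralSeries Q p :=
          lowerCentralSeries_antitone h2 hpush
        rw [hQbot] at hzz
        rw [Subgroup.mem_bot.mp hzz]
        simp
      · have hik : i < k*(i-1) + 1 := by
          have h2 : 2*(i-1) ≤ k*(i-1) := Nat.mul_le_mul hk2 (le_refl (i-1))
          generalize k*(i-1) = t at *
          omega
        have htors : (H₀.subtype (aa k)) ^ (p^e) = 1 := by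
          refine IH (k*(i-1)+1) hik _ ?_
          rwa [show k*(i-1)+1-1 = k*(i-1) by omega]
        obtain ⟨t, ht⟩ := pe_dvd_choose hp (by omega) hdk
        rw [ht, pow_mul, htors, one_pow]
  rw [hL, mul_one] at hformula
  -- z^(p^e) = z^(p^e) * w^(p^e)
  have : w ^ (p^e) = 1 := by
    have := mul_left_cancel (a := z ^ (p^e)) (b := w ^ (p^e)) (c := 1) ?_
    · exact this
    · rw [mul_one, ← hformula]
  exact this

theorem tor {p e : ℕ} (hp : p.Prime)
    (hQbot : lowerCentralSeries Q p = ⊥)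
    (hcent : ∀ x q : Q, ⁅x ^ (p ^ e), q⁆ = 1) :
    ∀ d i, 2 ≤ i → p + 1 ≤ i + d → ∀ x ∈ lowerCentralSeries Q (i-1), x ^ (p ^ e) = 1 := by
  intro d
  induction d with
  | zero =>
      intro i hi hpd x hx
      have hb : x ∈ lowerCentralSeries Q p := lowerCentralSeries_antitone (by omega) hx
      rw [hQbot] at hb
      rw [Subgroup.mem_bot.mp hb, one_pow]
  | succ d ihd =>
      intro i hi hpd x hx
      rcases Nat.lt_or_ge i (p+1) with hip | hip
      swap
      · have hb : x ∈ lowerCentralSeries Q p := lowerCentralSeries_antitone (by omega) hx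
        rw [hQbot] at hb
        rw [Subgroup.mem_bot.mp hb, one_pow]
      · have IH' : ∀ i', i < i' → ∀ y ∈ lowerCentralSeries Q (i'-1), y ^ (p^e) = 1 := by
          intro i' hii' y hy
          exact ihd i' (by omega) (by omega) y hy
        have hrw : lowerCentralSeries Q (i-1) =
            Subgroup.closure {x | ∃ z ∈ lowerCentralSeries Q (i-2),
              ∃ q ∈ (⊤ : Subgroup Q), z * q * z⁻¹ * q⁻¹ = x} := by
          rw [show i-1 = (i-2)+1 by omega]
          exact lowerCentralSeries_succ (i-2)
        rw [hrw] at hx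
        induction hx using Subgroup.closure_induction with
        | mem gg hgg =>
            obtain ⟨z, hzmem, qq, _, rfl⟩ := hgg
            have h := genlem hp hi hQbot hcent IH' (Subgroup.inv_mem _ hzmem) (q := qq)
            rw [inv_inv] at h
            simpa [commutatorElement_def] using h
        | one => exact one_pow _
        | mul a b ha hb iha ihb =>
            have ha' : a ∈ lowerCentralSeries Q (i-1) := by rw [hrw]; exact ha
            have hb' : b ∈ lowerCentralSeries Q (i-1) := by rw [hrw]; exact hb
            exact prodlem hp hi hQbot IH' ha' hb' iha ihb
        | inv a ha iha =>
            rw [inv_pow, iha, inv_one]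

end Torsion

end SchurExp

/-- The Schur multiplier case of Corollary 3.4: if `G = F/R` is a `p`-group of
class at most `p - 1` and exponent dividing `p^e` (i.e. `γ_p(F) ≤ R` and
`x^(p^e) ∈ R` for all `x ∈ F`), then every `g ∈ R ∩ ⁅F, F⁆` satisfies
`g^(p^e) ∈ ⁅R, F⁆`; that is, the exponent of the Schur multiplier
`M(G) = (R ∩ ⁅F, F⁆)/⁅R, F⁆` divides `exp(G)`.
(Here `γ_p(F) = lowerCentralSeries F (p - 1)`.) -/
theorem schurMultiplier_exponent_dvd_of_class_lt_p {F : Type*} [Group F]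
    [IsFreeGroup F] (R : Subgroup F) [R.Normal] (p e : ℕ) (hp : p.Prime)
    (he : 1 ≤ e)
    (hnil : (⊤ : Subgroup F).lowerCentralSeries (p - 1) ≤ R)
    (hexp : ∀ x : F, x ^ (p ^ e) ∈ R)
    (g : F) (hg : g ∈ R ⊓ commutator F) :
    g ^ (p ^ e) ∈ ⁅R, (⊤ : Subgroup F)⁆ := by
  set N : Subgroup F := ⁅R, (⊤ : Subgroup F)⁆ with hN
  haveI hNnormal : N.Normal := Subgroup.commutator_normal R ⊤
  set π : F →* F ⧸ N := QuotientGroup.mk' N with hπ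
  have hπsurj : Function.Surjective π := QuotientGroup.mk'_surjective N
  have hker : ∀ y : F, π y = 1 ↔ y ∈ N := fun y => QuotientGroup.eq_one_iff y
  have hcent : ∀ x q : F ⧸ N, ⁅x ^ (p ^ e), q⁆ = 1 := by
    intro x q
    obtain ⟨x₀, rfl⟩ := hπsurj x
    obtain ⟨q₀, rfl⟩ := hπsurj q
    have hmem : ⁅x₀ ^ (p ^ e), q₀⁆ ∈ N :=
      Subgroup.commutator_mem_commutator (hexp x₀) (Subgroup.mem_top q₀)
    have h1 : π ⁅x₀ ^ (p^e), q₀⁆ = 1 := (hker _).mpr hmem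
    rw [map_commutatorElement, map_pow] at h1
    exact h1
  have hmap : ∀ m, Subgroup.map π (SchurExp.lowerCentralSeries F m) = SchurExp.lowerCentralSeries (F ⧸ N) m :=
    SchurExp.lcs_map_surjective π hπsurj
  have hQbot : SchurExp.lowerCentralSeries (F ⧸ N) p = ⊥ := by
    have hp1 : p = (p-1) + 1 := by have := hp.two_le; omega
    rw [hp1]
    show ⁅SchurExp.lowerCentralSeries (F ⧸ N) (p-1), ⊤⁆ = ⊥
    rw [← hmap (p-1)]
    have h1 : Subgroup.map π (SchurExp.lowerCentralSeries F (p-1)) ≤ Subgroup.map π R :=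
      Subgroup.map_mono hnil
    have h2 : (⊤ : Subgroup (F ⧸ N)) = Subgroup.map π ⊤ :=
      (Subgroup.map_top_of_surjective π hπsurj).symm
    rw [h2]
    refine le_bot_iff.mp ?_
    refine le_trans (Subgroup.commutator_mono h1 (le_refl _)) ?_
    rw [← Subgroup.map_commutator]
    have h3 : Subgroup.map π ⁅R, ⊤⁆ = ⊥ := by
      rw [Subgroup.map_eq_bot_iff, hπ, QuotientGroup.ker_mk']
    exact le_of_eq h3
  have hgc : π g ∈ SchurExp.lowerCentralSeries (F ⧸ N) 1 := by
    have hg2 : g ∈ commutator F := (Subgroup.mem_inf.mp hg).2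
    have hg1 : g ∈ SchurExp.lowerCentralSeries F 1 := by rw [SchurExp.lowerCentralSeries_one]; exact hg2
    rw [← hmap 1]
    exact Subgroup.mem_map_of_mem π hg1
  have htor := SchurExp.tor hp hQbot hcent (p-1) 2 (by omega)
    (by have := hp.two_le; omega) (π g) (by simpa using hgc)
  rw [← map_pow] at htor
  exact (hker _).mp htor
end

section
/- Let k ≥ 1 and c ≥ 1 be integers and let G be a finite nilpotent group of nilpotency class at most k whose order is divisible only by primes p with p ≥ k+1 (equivalently, k ≤ p−1 for every prime divisor p of |G|). Then for any free presentation G = F/R (F free, R normal of finite index with γ_{k+1}(F) ≤ R), every g ∈ R ∩ γ_{c+1}(F) satisfies g^(exp(G)) ∈ [R, cF]; that is, the exponent of M^(c)(G) divides exp(G). -/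
/-!
Auxiliary development for the exponent of the c-nilpotent multiplier.
-/

open scoped commutatorElement

namespace NilpMultAux

open Subgroup

universe u

variable {G : Type u} [Group G]

/-- Lower central series of the group `K` itself. -/
abbrev lowerCentralSeries (K : Type u) [Group K] (n : ℕ) : Subgroup K :=
  (⊤ : Subgroup K).lowerCentralSeries n

theorem lowerCentralSeries_zero : lowerCentralSeries G 0 = ⊤ := rfl

theorem lowerCentralSeries_antitone : Antitone (lowerCentralSeries G) :=
  Subgroup.lowerCentralSeries_antitone ⊤

instance lowerCentralSeries_normal (n : ℕ) : (lowerCentralSeries G n).Normal :=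
  Subgroup.lowerCentralSeries_normal ⊤ n

theorem lowerCentralSeries_map_subtype_le (B : Subgroup G) (n : ℕ) :
    (lowerCentralSeries B n).map B.subtype ≤ lowerCentralSeries G n :=
  Subgroup.lowerCentralSeries_map_subtype_le B n

/-- Three subgroups lemma, relative version: if `⁅⁅B,C⁆,A⁆ ≤ M` and `⁅⁅C,A⁆,B⁆ ≤ M`
for a normal subgroup `M`, then `⁅⁅A,B⁆,C⁆ ≤ M`. -/
theorem commutator_commutator_le_of_rotate {A B C M : Subgroup G} [hM : M.Normal]
    (h1 : ⁅⁅B, C⁆, A⁆ ≤ M) (h2 : ⁅⁅C, A⁆, B⁆ ≤ M) : ⁅⁅A, B⁆, C⁆ ≤ M := by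
  rw [Subgroup.commutator_le]
  intro w hw z hz
  revert z
  rw [Subgroup.commutator_def A B] at hw
  induction hw using Subgroup.closure_induction with
  | mem w hw =>
    obtain ⟨x, hx, y, hy, rfl⟩ := hw
    intro z hz
    have hP : ⁅y, ⁅z⁻¹, x⁻¹⁆⁆⁻¹ ∈ M := by
      rw [commutatorElement_inv]
      exact h2 (commutator_mem_commutator
        (commutator_mem_commutator (C.inv_mem hz) (A.inv_mem hx)) hy)
    have hQ : ⁅x⁻¹, ⁅y⁻¹, z⁆⁆⁻¹ ∈ M := by
      rw [commutatorElement_inv]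
      exact h1 (commutator_mem_commutator
        (commutator_mem_commutator (B.inv_mem hy) hz) (A.inv_mem hx))
    have key : ⁅z, ⁅x, y⁆⁆ =
        (x * z) * ⁅y, ⁅z⁻¹, x⁻¹⁆⁆⁻¹ * (x * z)⁻¹ *
          ((x * y) * ⁅x⁻¹, ⁅y⁻¹, z⁆⁆⁻¹ * (x * y)⁻¹) := by
      group
    have key2 : ⁅⁅x, y⁆, z⁆ = ⁅z, ⁅x, y⁆⁆⁻¹ := (commutatorElement_inv z ⁅x, y⁆).symm
    rw [key2, key]
    exact inv_mem (mul_mem (hM.conj_mem _ hP _) (hM.conj_mem _ hQ _))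
  | one =>
    intro z hz
    have : ⁅(1 : G), z⁆ = 1 := by group
    rw [this]; exact one_mem M
  | mul w₁ w₂ hw₁ hw₂ p₁ p₂ =>
    intro z hz
    have key : ⁅w₁ * w₂, z⁆ = w₁ * ⁅w₂, z⁆ * w₁⁻¹ * ⁅w₁, z⁆ := by group
    rw [key]
    exact mul_mem (hM.conj_mem _ (p₂ z hz) _) (p₁ z hz)
  | inv w hw p =>
    intro z hz
    have key : ⁅w⁻¹, z⁆ = w⁻¹ * ⁅w, z⁆⁻¹ * w := by group
    rw [key]
    have : w⁻¹ * ⁅w, z⁆⁻¹ * w = w⁻¹ * ⁅w, z⁆⁻¹ * (w⁻¹)⁻¹ := by group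
    rw [this]
    exact hM.conj_mem _ (inv_mem (p z hz)) _

/-- `⁅γ_{n+1}, γ_{m+1}⁆ ≤ γ_{n+m+2}` (Mathlib indexing). -/
theorem lcs_commutator_le_lcs (n m : ℕ) :
    ⁅lowerCentralSeries G n, lowerCentralSeries G m⁆ ≤ lowerCentralSeries G (n + m + 1) := by
  induction m generalizing n with
  | zero =>
    have h : lowerCentralSeries G (n + 0 + 1) = ⁅lowerCentralSeries G n, ⊤⁆ := rfl
    rw [lowerCentralSeries_zero, h]
  | succ m ih =>
    have h0 : lowerCentralSeries G (m + 1) = ⁅lowerCentralSeries G m, ⊤⁆ := rfl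
    rw [h0, Subgroup.commutator_comm]
    apply commutator_commutator_le_of_rotate
    · rw [Subgroup.commutator_comm (⊤ : Subgroup G)]
      have h1 : ⁅lowerCentralSeries G n, (⊤ : Subgroup G)⁆ = lowerCentralSeries G (n + 1) := rfl
      rw [h1]
      have := ih (n + 1)
      have e : n + 1 + m + 1 = n + (m + 1) + 1 := by omega
      rwa [e] at this
    · have h2 : ⁅lowerCentralSeries G (n + m + 1), (⊤ : Subgroup G)⁆ =
        lowerCentralSeries G (n + m + 1 + 1) := rfl
      have := Subgroup.commutator_mono (ih n) (le_refl (⊤ : Subgroup G))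
      rw [h2] at this
      have e : n + m + 1 + 1 = n + (m + 1) + 1 := by omega
      rwa [e] at this

theorem lcs_succ (n : ℕ) :
    lowerCentralSeries G (n + 1) = ⁅lowerCentralSeries G n, (⊤ : Subgroup G)⁆ := rfl

theorem map_top_of_surj {G' : Type u} [Group G'] (f : G →* G') (hf : Function.Surjective f) :
    (⊤ : Subgroup G).map f = ⊤ := by
  rw [← MonoidHom.range_eq_map]
  exact MonoidHom.range_eq_top.mpr hf

theorem lcs_map_eq {G' : Type u} [Group G'] (f : G →* G') (hf : Function.Surjective f) (n : ℕ) :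
    (lowerCentralSeries G n).map f = lowerCentralSeries G' n := by
  induction n with
  | zero => simpa using map_top_of_surj f hf
  | succ m ih =>
    rw [lcs_succ, lcs_succ, Subgroup.map_commutator, ih, map_top_of_surj f hf]

/-! ### Polynomial sequences -/

/-- Difference operator on sequences in a group. -/
def DOp (f : ℕ → G) : ℕ → G := fun n => (f n)⁻¹ * f (n + 1)

/-- Weight filtration: `Gam G v = γ_v` classically (`Gam G 0 = Gam G 1 = ⊤`). -/
def Gam (G : Type u) [Group G] (v : ℕ) : Subgroup G := lowerCentralSeries G (v - 1)

theorem Gam_antitone : Antitone (Gam G) := fun _ _ h =>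
  lowerCentralSeries_antitone (Nat.sub_le_sub_right h 1)

instance Gam_normal (v : ℕ) : (Gam G v).Normal :=
  inferInstanceAs (lowerCentralSeries G (v - 1)).Normal

theorem Gam_zero : Gam G 0 = ⊤ := rfl

theorem Gam_one : Gam G 1 = ⊤ := rfl

theorem Gam_commutator_le (v w : ℕ) : ⁅Gam G v, Gam G w⁆ ≤ Gam G (v + w) := by
  match v, w with
  | 0, w =>
    rw [Gam_zero]
    have : ⁅(⊤ : Subgroup G), Gam G w⁆ ≤ Gam G w := Subgroup.commutator_le_right _ _
    exact this.trans (Gam_antitone (by omega))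
  | v + 1, 0 =>
    rw [Gam_zero]
    exact Subgroup.commutator_le_left _ _
  | v + 1, w + 1 =>
    have h := lcs_commutator_le_lcs (G := G) v w
    have e1 : Gam G (v + 1) = lowerCentralSeries G v := rfl
    have e2 : Gam G (w + 1) = lowerCentralSeries G w := rfl
    have e3 : Gam G (v + 1 + (w + 1)) = lowerCentralSeries G (v + w + 1) := by
      show lowerCentralSeries G (v + 1 + (w + 1) - 1) = _
      congr 1
      omega
    rw [e1, e2, e3]
    exact h

theorem mem_Gam_commutator {v w : ℕ} {x y : G} (hx : x ∈ Gam G v) (hy : y ∈ Gam G w) :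
    ⁅x, y⁆ ∈ Gam G (v + w) :=
  Gam_commutator_le v w (commutator_mem_commutator hx hy)

/-- `f` is polynomial up to order `ρ` with base weight `v`. -/
def PolyTo (ρ v : ℕ) (f : ℕ → G) : Prop := ∀ r ≤ ρ, ∀ n, DOp^[r] f n ∈ Gam G (v + r)

theorem polyTo_mono_rho {ρ ρ' v : ℕ} {f : ℕ → G} (h : ρ' ≤ ρ) (hf : PolyTo ρ v f) :
    PolyTo ρ' v f := fun r hr n => hf r (hr.trans h) n

theorem polyTo_mono_wt {ρ v v' : ℕ} {f : ℕ → G} (h : v' ≤ v) (hf : PolyTo ρ v f) :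
    PolyTo ρ v' f := fun r hr n => Gam_antitone (Nat.add_le_add_right h r) (hf r hr n)

theorem polyTo_D {ρ v : ℕ} {f : ℕ → G} (hf : PolyTo (ρ + 1) v f) : PolyTo ρ (v + 1) (DOp f) := by
  intro r hr n
  have h2 := hf (r + 1) (Nat.add_le_add_right hr 1) n
  rw [Function.iterate_succ_apply] at h2
  have e : v + (r + 1) = v + 1 + r := by omega
  rwa [e] at h2

theorem polyTo_congr {ρ v : ℕ} {f g : ℕ → G} (h : ∀ n, f n = g n) (hf : PolyTo ρ v f) :
    PolyTo ρ v g := by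
  have : f = g := funext h
  rwa [this] at hf

/-- Closure of polynomial sequences under products, inverses and commutators
(Leibman-type lemma), by induction on the order `ρ`. -/
theorem f_succ_eq {f : ℕ → G} (n : ℕ) : f (n + 1) = f n * DOp f n := by
  simp [DOp]

theorem polyTo_closure (ρ : ℕ) :
    (∀ v w (f g : ℕ → G), PolyTo ρ v f → PolyTo ρ w g → PolyTo ρ (min v w) (fun n => f n * g n))
    ∧ (∀ v (f : ℕ → G), PolyTo ρ v f → PolyTo ρ v (fun n => (f n)⁻¹))
    ∧ (∀ v w (f g : ℕ → G), PolyTo ρ v f → PolyTo ρ w g →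
        PolyTo ρ (v + w) (fun n => ⁅f n, g n⁆)) := by
  induction ρ with
  | zero =>
    refine ⟨?_, ?_, ?_⟩
    · intro v w f g hf hg r hr n
      have hr0 : r = 0 := Nat.le_zero.mp hr
      subst hr0
      have h1 : f n ∈ Gam G v := by simpa using hf 0 le_rfl n
      have h2 : g n ∈ Gam G w := by simpa using hg 0 le_rfl n
      simpa using mul_mem (Gam_antitone (min_le_left v w) h1)
        (Gam_antitone (min_le_right v w) h2)
    · intro v f hf r hr n
      have hr0 : r = 0 := Nat.le_zero.mp hr
      subst hr0
      have h1 : f n ∈ Gam G v := by simpa using hf 0 le_rfl n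
      simpa using inv_mem h1
    · intro v w f g hf hg r hr n
      have hr0 : r = 0 := Nat.le_zero.mp hr
      subst hr0
      have h1 : f n ∈ Gam G v := by simpa using hf 0 le_rfl n
      have h2 : g n ∈ Gam G w := by simpa using hg 0 le_rfl n
      simpa using mem_Gam_commutator h1 h2
  | succ ρ ih =>
    obtain ⟨ihMul, ihInv, ihComm⟩ := ih
    have ihMul' : ∀ t (f g : ℕ → G), PolyTo ρ t f → PolyTo ρ t g →
        PolyTo ρ t (fun n => f n * g n) := by
      intro t f g hf hg
      have := ihMul t t f g hf hg
      rwa [min_self] at this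
    have ihConj : ∀ t (z h : ℕ → G), PolyTo ρ t z → PolyTo ρ 0 h →
        PolyTo ρ t (fun n => h n * z n * (h n)⁻¹) := by
      intro t z h hz hh
      have hcomm : PolyTo ρ (0 + t) (fun n => ⁅h n, z n⁆) := ihComm 0 t h z hh hz
      rw [Nat.zero_add] at hcomm
      have hm := ihMul' t _ _ hcomm hz
      refine polyTo_congr (fun n => ?_) hm
      show ⁅h n, z n⁆ * z n = _
      group
    -- the three statements at level ρ + 1
    refine ⟨?_, ?_, ?_⟩
    · -- MUL
      intro v w f g hf hg r hr n
      match r with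
      | 0 =>
        have h1 : f n ∈ Gam G v := by simpa using hf 0 (by omega) n
        have h2 : g n ∈ Gam G w := by simpa using hg 0 (by omega) n
        simpa using mul_mem (Gam_antitone (min_le_left v w) h1)
          (Gam_antitone (min_le_right v w) h2)
      | r + 1 =>
        have hDf : PolyTo ρ (v + 1) (DOp f) := polyTo_D hf
        have hDg : PolyTo ρ (w + 1) (DOp g) := polyTo_D hg
        have hginv : PolyTo ρ w (fun n => (g n)⁻¹) :=
          ihInv w g (polyTo_mono_rho (Nat.le_succ ρ) hg)
        have hcomm : PolyTo ρ (w + (v + 1)) (fun n => ⁅(g n)⁻¹, DOp f n⁆) :=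
          ihComm _ _ _ _ hginv hDf
        have u1 : PolyTo ρ (min v w + 1) (fun n => ⁅(g n)⁻¹, DOp f n⁆) :=
          polyTo_mono_wt (by omega) hcomm
        have u2 : PolyTo ρ (min v w + 1) (DOp f) := polyTo_mono_wt (by omega) hDf
        have u3 : PolyTo ρ (min v w + 1) (DOp g) := polyTo_mono_wt (by omega) hDg
        have hprod : PolyTo ρ (min v w + 1)
            (fun n => ⁅(g n)⁻¹, DOp f n⁆ * DOp f n * DOp g n) :=
          ihMul' _ _ _ (ihMul' _ _ _ u1 u2) u3
        have hD : DOp (fun n => f n * g n) =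
            fun n => ⁅(g n)⁻¹, DOp f n⁆ * DOp f n * DOp g n := by
          funext m
          show (f m * g m)⁻¹ * (f (m + 1) * g (m + 1)) = _
          rw [f_succ_eq (f := f) m, f_succ_eq (f := g) m]
          group
        rw [Function.iterate_succ_apply, hD]
        have := hprod r (by omega) n
        have e : min v w + 1 + r = min v w + (r + 1) := by omega
        rwa [e] at this
    · -- INV
      intro v f hf r hr n
      match r with
      | 0 =>
        have h1 : f n ∈ Gam G v := by simpa using hf 0 (by omega) n
        simpa using inv_mem h1
      | r + 1 =>
        have hDf : PolyTo ρ (v + 1) (DOp f) := polyTo_D hf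
        have hDfinv : PolyTo ρ (v + 1) (fun n => (DOp f n)⁻¹) := ihInv _ _ hDf
        have hf' : PolyTo ρ v f := polyTo_mono_rho (Nat.le_succ ρ) hf
        have hcomm : PolyTo ρ (v + 1 + v) (fun n => ⁅DOp f n, f n⁆) := ihComm _ _ _ _ hDf hf'
        have hprod : PolyTo ρ (v + 1)
            (fun n => (DOp f n)⁻¹ * ⁅DOp f n, f n⁆) :=
          ihMul' _ _ _ hDfinv (polyTo_mono_wt (by omega) hcomm)
        have hD : DOp (fun n => (f n)⁻¹) = fun n => (DOp f n)⁻¹ * ⁅DOp f n, f n⁆ := by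
          funext m
          show (f m)⁻¹⁻¹ * (f (m + 1))⁻¹ = _
          rw [f_succ_eq (f := f) m]
          group
        rw [Function.iterate_succ_apply, hD]
        have := hprod r (by omega) n
        have e : v + 1 + r = v + (r + 1) := by omega
        rwa [e] at this
    · -- COMM
      intro v w f g hf hg r hr n
      match r with
      | 0 =>
        have h1 : f n ∈ Gam G v := by simpa using hf 0 (by omega) n
        have h2 : g n ∈ Gam G w := by simpa using hg 0 (by omega) n
        simpa using mem_Gam_commutator h1 h2
      | r + 1 =>
        have hf' : PolyTo ρ v f := polyTo_mono_rho (Nat.le_succ ρ) hf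
        have hg' : PolyTo ρ w g := polyTo_mono_rho (Nat.le_succ ρ) hg
        have hf0 : PolyTo ρ 0 f := polyTo_mono_wt (by omega) hf'
        have hg0 : PolyTo ρ 0 g := polyTo_mono_wt (by omega) hg'
        have hDf : PolyTo ρ (v + 1) (DOp f) := polyTo_D hf
        have hDg : PolyTo ρ (w + 1) (DOp g) := polyTo_D hg
        set W : ℕ → G := fun n =>
          f n * (⁅DOp f n, g n⁆ * (g n * ⁅DOp f n, DOp g n⁆ * (g n)⁻¹)) * (f n)⁻¹ with hWdef
        set V : ℕ → G := fun n => g n * ⁅f n, DOp g n⁆ * (g n)⁻¹ with hVdef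
        have hW : PolyTo ρ (v + w + 1) W := by
          have p1 : PolyTo ρ (v + 1 + w) (fun n => ⁅DOp f n, g n⁆) := ihComm _ _ _ _ hDf hg'
          have p2 : PolyTo ρ (v + 1 + (w + 1)) (fun n => ⁅DOp f n, DOp g n⁆) :=
            ihComm _ _ _ _ hDf hDg
          have p2' : PolyTo ρ (v + w + 1)
              (fun n => g n * ⁅DOp f n, DOp g n⁆ * (g n)⁻¹) :=
            ihConj _ _ _ (polyTo_mono_wt (by omega) p2) hg0
          have p3 : PolyTo ρ (v + w + 1)
              (fun n => ⁅DOp f n, g n⁆ * (g n * ⁅DOp f n, DOp g n⁆ * (g n)⁻¹)) :=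
            ihMul' _ _ _ (polyTo_mono_wt (by omega) p1) p2'
          exact ihConj _ _ _ p3 hf0
        have hV : PolyTo ρ (v + w + 1) V := by
          have p1 : PolyTo ρ (v + (w + 1)) (fun n => ⁅f n, DOp g n⁆) := ihComm _ _ _ _ hf' hDg
          exact ihConj _ _ _ (polyTo_mono_wt (by omega) p1) hg0
        have hC : PolyTo ρ (v + w) (fun n => ⁅f n, g n⁆) := ihComm _ _ _ _ hf' hg'
        have hCinv : PolyTo ρ (v + w) (fun n => (⁅f n, g n⁆)⁻¹) := ihInv _ _ hC
        have hterm1 : PolyTo ρ (v + w + (v + w + 1))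
            (fun n => ⁅(⁅f n, g n⁆)⁻¹, W n⁆) := ihComm _ _ _ _ hCinv hW
        have hprod : PolyTo ρ (v + w + 1)
            (fun n => ⁅(⁅f n, g n⁆)⁻¹, W n⁆ * W n * V n) :=
          ihMul' _ _ _ (ihMul' _ _ _ (polyTo_mono_wt (by omega) hterm1) hW) hV
        have hD : DOp (fun n => ⁅f n, g n⁆) =
            fun n => ⁅(⁅f n, g n⁆)⁻¹, W n⁆ * W n * V n := by
          funext m
          show (⁅f m, g m⁆)⁻¹ * ⁅f (m + 1), g (m + 1)⁆ = _
          rw [f_succ_eq (f := f) m, f_succ_eq (f := g) m, hWdef, hVdef]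
          simp only []
          group
        rw [Function.iterate_succ_apply, hD]
        have := hprod r (by omega) n
        have e : v + w + 1 + r = v + w + (r + 1) := by omega
        rwa [e] at this

theorem polyTo_mul {ρ v w : ℕ} {f g : ℕ → G} (hf : PolyTo ρ v f) (hg : PolyTo ρ w g) :
    PolyTo ρ (min v w) (fun n => f n * g n) := (polyTo_closure ρ).1 v w f g hf hg

theorem polyTo_mul₀ {ρ : ℕ} {f g : ℕ → G} (hf : PolyTo ρ 0 f) (hg : PolyTo ρ 0 g) :
    PolyTo ρ 0 (fun n => f n * g n) := by
  simpa using polyTo_mul hf hg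

/-- The sequence `j ↦ g ^ j` is polynomial. -/
theorem DOp_const_one : DOp (fun _ : ℕ => (1 : G)) = fun _ => 1 := by
  funext n; simp [DOp]

theorem DOp_iterate_const_one : ∀ r, DOp^[r] (fun _ : ℕ => (1 : G)) = fun _ => 1
  | 0 => rfl
  | r + 1 => by
    rw [Function.iterate_succ_apply, DOp_const_one, DOp_iterate_const_one r]

theorem polyTo_one (ρ v : ℕ) : PolyTo ρ v (fun _ => (1 : G)) := by
  intro r _ n
  rw [DOp_iterate_const_one r]
  exact one_mem _

theorem polyTo_pow (g : G) (ρ : ℕ) : PolyTo ρ 0 (fun j => g ^ j) := by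
  have h1 : DOp (fun j : ℕ => g ^ j) = fun _ => g := by
    funext n; simp [DOp, pow_succ]
  have h2 : DOp (fun _ : ℕ => g) = fun _ => 1 := by
    funext n; simp [DOp]
  intro r hr n
  match r with
  | 0 => exact Subgroup.mem_top _
  | 1 =>
    rw [Function.iterate_one, h1]
    exact Subgroup.mem_top _
  | r + 2 =>
    rw [Function.iterate_succ_apply, h1, Function.iterate_succ_apply, h2,
      DOp_iterate_const_one r]
    exact one_mem _

/-- The sequence `j ↦ d ^ (j.choose i)` is polynomial when `d ∈ Gam G i`. -/
theorem DOp_choose (d : G) (i : ℕ) :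
    DOp (fun j => d ^ Nat.choose j (i + 1)) = fun j => d ^ Nat.choose j i := by
  funext j
  show (d ^ Nat.choose j (i + 1))⁻¹ * d ^ Nat.choose (j + 1) (i + 1) = _
  rw [Nat.choose_succ_succ, pow_add,
    pow_mul_comm d (Nat.choose j i) (Nat.choose j (i + 1)), inv_mul_cancel_left]

theorem DOp_iterate_choose (d : G) : ∀ r i, r ≤ i →
    DOp^[r] (fun j => d ^ Nat.choose j i) = fun j => d ^ Nat.choose j (i - r)
  | 0, i, _ => by simp
  | r + 1, i, h => by
    obtain ⟨i', rfl⟩ : ∃ i', i = i' + 1 := ⟨i - 1, by omega⟩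
    rw [Function.iterate_succ_apply, DOp_choose d i',
      DOp_iterate_choose d r i' (by omega)]
    funext j
    congr 2
    omega

theorem polyTo_choose {d : G} {i : ℕ} (hd : d ∈ Gam G i) (ρ : ℕ) :
    PolyTo ρ 0 (fun j => d ^ Nat.choose j i) := by
  have hconst : DOp^[i] (fun j => d ^ Nat.choose j i) = fun _ => d := by
    rw [DOp_iterate_choose d i i le_rfl]
    funext j; simp
  intro r _ n
  rcases le_or_gt r i with hri | hri
  · rw [DOp_iterate_choose d r i hri]
    have hmem : d ∈ Gam G (0 + r) := Gam_antitone (by omega) hd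
    exact Subgroup.pow_mem _ hmem _
  · have hsplit : r = (r - (i + 1)) + (i + 1) := by omega
    rw [hsplit, Function.iterate_add_apply, Function.iterate_succ_apply', hconst]
    have : DOp (fun _ : ℕ => d) = fun _ => 1 := by funext m; simp [DOp]
    rw [this, DOp_iterate_const_one]
    exact one_mem _

/-! ### Newton's formula -/

theorem list_range_map_prod {A : Type*} [CommMonoid A] (n : ℕ) (F : ℕ → A) :
    ((List.range n).map F).prod = ∏ r ∈ Finset.range n, F r := by
  induction n with
  | zero => simp
  | succ m ih =>
    rw [List.range_succ, List.map_append, List.prod_append, Finset.prod_range_succ, ih]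
    simp

theorem newton_list {A : Type*} [CommGroup A] :
    ∀ (j : ℕ) (f : ℕ → A),
      f j = ((List.range (j + 1)).map fun r => DOp^[r] f 0 ^ Nat.choose j r).prod := by
  intro j
  induction j with
  | zero =>
    intro f
    rw [List.range_succ]
    simp
  | succ j ihj =>
    intro f
    have hQterm : ∀ r, DOp^[r] (DOp f) 0 = DOp^[r + 1] f 0 := fun r => by
      rw [Function.iterate_succ_apply]
    have step : f (j + 1) = f j * DOp f j := f_succ_eq j
    rw [step, ihj f, ihj (DOp f)]
    rw [list_range_map_prod, list_range_map_prod, list_range_map_prod]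
    have hQ : ∏ r ∈ Finset.range (j + 1), DOp^[r] (DOp f) 0 ^ Nat.choose j r
        = ∏ r ∈ Finset.range (j + 1), DOp^[r + 1] f 0 ^ Nat.choose j r :=
      Finset.prod_congr rfl (fun r _ => by rw [hQterm r])
    rw [hQ]
    have hT : ∏ r ∈ Finset.range (j + 1 + 1), DOp^[r] f 0 ^ Nat.choose (j + 1) r
        = DOp^[0] f 0 *
          ∏ r ∈ Finset.range (j + 1), DOp^[r + 1] f 0 ^ Nat.choose (j + 1) (r + 1) := by
      rw [Finset.prod_range_succ', Nat.choose_zero_right, pow_one, mul_comm]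
    rw [hT]
    have hsplit : ∏ r ∈ Finset.range (j + 1), DOp^[r + 1] f 0 ^ Nat.choose (j + 1) (r + 1)
        = ∏ r ∈ Finset.range (j + 1),
            (DOp^[r + 1] f 0 ^ Nat.choose j r * DOp^[r + 1] f 0 ^ Nat.choose j (r + 1)) :=
      Finset.prod_congr rfl (fun r _ => by rw [← pow_add, Nat.choose_succ_succ])
    rw [hsplit, Finset.prod_mul_distrib]
    have hP : ∏ r ∈ Finset.range (j + 1), DOp^[r] f 0 ^ Nat.choose j r
        = (∏ r ∈ Finset.range j, DOp^[r + 1] f 0 ^ Nat.choose j (r + 1)) * DOp^[0] f 0 := by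
      rw [Finset.prod_range_succ']
      simp
    have hlast : ∏ r ∈ Finset.range (j + 1), DOp^[r + 1] f 0 ^ Nat.choose j (r + 1)
        = ∏ r ∈ Finset.range j, DOp^[r + 1] f 0 ^ Nat.choose j (r + 1) := by
      rw [Finset.prod_range_succ, Nat.choose_succ_self, pow_zero, mul_one]
    rw [hlast, hP]
    simp [mul_comm, mul_left_comm, mul_assoc]

/-! ### Hall–Petrescu -/

/-- Hall–Petrescu-type decomposition: in a nilpotent group (class bounded by `M`),
`(a*b)^j = a^j * b^j * ∏ dᵢ^{C(j,i)}` with each `dᵢ` of weight `≥ i`. -/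
theorem hall_petrescu :
    ∀ (M : ℕ) (K : Type u) [Group K], lowerCentralSeries K M = ⊥ → ∀ a b : K,
      ∃ L : List (ℕ × K),
        (∀ p ∈ L, (2 ≤ p.1 ∧ p.2 ∈ lowerCentralSeries K (p.1 - 1)) ∨ p.2 = 1) ∧
        ∀ j : ℕ, (a * b) ^ j =
          a ^ j * b ^ j * (L.map fun p => p.2 ^ Nat.choose j p.1).prod := by
  intro M
  induction M with
  | zero =>
    intro K _ hK a b
    have htriv : ∀ x : K, x = 1 := by
      intro x
      have hx : x ∈ lowerCentralSeries K 0 := Subgroup.mem_top x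
      rw [hK] at hx
      exact Subgroup.mem_bot.mp hx
    refine ⟨[], by simp, fun j => ?_⟩
    rw [htriv a, htriv b]
    simp
  | succ M ih =>
    intro K _ hK a b
    set Γm := lowerCentralSeries K M with hΓdef
    let mkh : K →* K ⧸ Γm := QuotientGroup.mk' Γm
    have hsurj : Function.Surjective mkh := QuotientGroup.mk'_surjective Γm
    have hker : mkh.ker = Γm := QuotientGroup.ker_mk' Γm
    have hQ : lowerCentralSeries (K ⧸ Γm) M = ⊥ := by
      rw [← lcs_map_eq mkh hsurj M]
      rw [Subgroup.map_eq_bot_iff, hker]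
    obtain ⟨Lb, hLbcond, hLbeq⟩ := ih (K ⧸ Γm) hQ (mkh a) (mkh b)
    -- lift the list
    have hlift : ∀ (Lb : List (ℕ × (K ⧸ Γm))),
        (∀ p ∈ Lb, (2 ≤ p.1 ∧ p.2 ∈ lowerCentralSeries (K ⧸ Γm) (p.1 - 1)) ∨ p.2 = 1) →
        ∃ L : List (ℕ × K),
          (∀ p ∈ L, (2 ≤ p.1 ∧ p.2 ∈ lowerCentralSeries K (p.1 - 1)) ∨ p.2 = 1) ∧
          L.map (Prod.map id mkh) = Lb := by
      intro Lb
      induction Lb with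
      | nil => exact fun _ => ⟨[], by simp, by simp⟩
      | cons p Lb ihl =>
        intro hcond
        obtain ⟨L, hL, hmap⟩ := ihl (fun q hq => hcond q (List.mem_cons_of_mem p hq))
        rcases hcond p List.mem_cons_self with ⟨h2, hmem⟩ | h1
        · rw [← lcs_map_eq mkh hsurj] at hmem
          obtain ⟨d, hd, hd2⟩ := hmem
          refine ⟨(p.1, d) :: L, ?_, ?_⟩
          · intro q hq
            rcases List.mem_cons.mp hq with rfl | hq
            · exact Or.inl ⟨h2, hd⟩
            · exact hL q hq
          · simp only [List.map_cons, hmap]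
            congr 1
            exact Prod.ext rfl hd2
        · refine ⟨(p.1, 1) :: L, ?_, ?_⟩
          · intro q hq
            rcases List.mem_cons.mp hq with rfl | hq
            · exact Or.inr rfl
            · exact hL q hq
          · simp only [List.map_cons, hmap]
            congr 1
            refine Prod.ext rfl ?_
            simp [h1]
    obtain ⟨L, hLcond, hLmap⟩ := hlift Lb hLbcond
    set P : ℕ → K := fun j => (L.map fun p => p.2 ^ Nat.choose j p.1).prod with hPdef
    have hmkP : ∀ j, mkh (P j) = (Lb.map fun p => p.2 ^ Nat.choose j p.1).prod := by
      intro j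
      rw [hPdef]
      rw [map_list_prod, ← hLmap, List.map_map, List.map_map]
      refine congrArg List.prod (List.map_congr_left fun p _ => ?_)
      simp [Prod.map]
    set z : ℕ → K := fun j => (a ^ j * b ^ j * P j)⁻¹ * (a * b) ^ j with hzdef
    have hzmem : ∀ j, z j ∈ Γm := by
      intro j
      have h1 : mkh (z j) = 1 := by
        rw [hzdef]
        simp only [map_mul, map_inv, map_pow]
        rw [hmkP j, ← hLbeq j]
        simp
      have h2 : z j ∈ mkh.ker := h1
      rwa [hker] at h2
    have hcent : ∀ x ∈ Γm, ∀ y : K, x * y = y * x := by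
      intro x hx y
      have hcc : ⁅x, y⁆ ∈ lowerCentralSeries K (M + 1) :=
        commutator_mem_commutator hx (Subgroup.mem_top y)
      rw [hK] at hcc
      exact commutatorElement_eq_one_iff_mul_comm.mp (Subgroup.mem_bot.mp hcc)
    letI : CommGroup Γm :=
      { (inferInstance : Group Γm) with
        mul_comm := fun x y => Subtype.ext (hcent x.1 x.2 y.1) }
    -- Poly of z
    have hzpoly : ∀ ρ, PolyTo ρ 0 z := by
      intro ρ
      have hlistpoly : ∀ (l : List (ℕ × K)), (∀ p ∈ l, p.2 ∈ Gam K p.1 ∨ p.2 = 1) →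
          PolyTo ρ 0 (fun j => (l.map fun p => p.2 ^ Nat.choose j p.1).prod) := by
        intro l hl
        induction l with
        | nil =>
          refine polyTo_congr (fun n => ?_) (polyTo_one ρ 0)
          simp
        | cons p l ihl =>
          have hp := hl p List.mem_cons_self
          have htail := ihl (fun q hq => hl q (List.mem_cons_of_mem p hq))
          have hhead : PolyTo ρ 0 (fun j => p.2 ^ Nat.choose j p.1) := by
            rcases hp with hmem | h1
            · exact polyTo_choose hmem ρ
            · refine polyTo_congr (fun n => ?_) (polyTo_one ρ 0)
              rw [h1]; simp
          refine polyTo_congr (fun n => ?_) (polyTo_mul₀ hhead htail)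
          simp
      have hcondGam : ∀ p ∈ L, p.2 ∈ Gam K p.1 ∨ p.2 = 1 := by
        intro p hp
        rcases hLcond p hp with ⟨_, hmem⟩ | h1
        · exact Or.inl hmem
        · exact Or.inr h1
      have hPpoly : PolyTo ρ 0 P := hlistpoly L hcondGam
      have hPinvpoly : PolyTo ρ 0 (fun j => (P j)⁻¹) := by
        have hcond' : ∀ p ∈ L.reverse.map (fun p : ℕ × K => (p.1, p.2⁻¹)),
            p.2 ∈ Gam K p.1 ∨ p.2 = 1 := by
          intro p hp
          obtain ⟨q, hq, rfl⟩ := List.mem_map.mp hp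
          rcases hcondGam q (List.mem_reverse.mp hq) with hmem | h1
          · exact Or.inl (inv_mem hmem)
          · right; rw [h1]; simp
        have := hlistpoly _ hcond'
        refine polyTo_congr (fun j => ?_) this
        rw [hPdef, List.prod_inv_reverse]
        simp only [← List.map_reverse, List.map_map]
        refine congrArg List.prod (List.map_congr_left fun p _ => ?_)
        simp [inv_pow]
      have hab : PolyTo ρ 0 (fun j => (a * b) ^ j) := polyTo_pow (a * b) ρ
      have hbi : PolyTo ρ 0 (fun j => (b⁻¹) ^ j) := polyTo_pow b⁻¹ ρ
      have hai : PolyTo ρ 0 (fun j => (a⁻¹) ^ j) := polyTo_pow a⁻¹ ρ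
      have hall := polyTo_mul₀ (polyTo_mul₀ (polyTo_mul₀ hPinvpoly hbi) hai) hab
      refine polyTo_congr (fun j => ?_) hall
      rw [hzdef]
      simp only [inv_pow]
      group
    -- Newton for z
    set az : ℕ → K := fun r => DOp^[r] z 0 with hazdef
    have hvalseq : ∀ (w : ℕ → Γm) (r : ℕ) (n : ℕ),
        ((DOp^[r] w n : Γm) : K) = DOp^[r] (fun j => ((w j : K))) n := by
      intro w r
      induction r generalizing w with
      | zero => intro n; rfl
      | succ r ihr =>
        intro n
        rw [Function.iterate_succ_apply, Function.iterate_succ_apply]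
        have hstep : (fun j => ((DOp w j : Γm) : K)) = DOp (fun j => (w j : K)) := by
          funext m
          simp [DOp]
        rw [← hstep]
        exact ihr (DOp w) n
    have hza : ∀ r, az r ∈ Gam K r := by
      intro r
      have := hzpoly r r le_rfl 0
      simpa using this
    have hvanish : ∀ r, M + 2 ≤ r → az r = 1 := by
      intro r hrM
      have h1 := hza r
      have hbot : Gam K r = ⊥ := by
        show lowerCentralSeries K (r - 1) = ⊥
        have hle : lowerCentralSeries K (r - 1) ≤ lowerCentralSeries K (M + 1) :=
          lowerCentralSeries_antitone (by omega)
        rw [hK] at hle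
        exact le_bot_iff.mp hle
      rw [hbot] at h1
      exact Subgroup.mem_bot.mp h1
    have hpad : ∀ (F : ℕ → K) (nn NN : ℕ), nn ≤ NN → (∀ r, nn ≤ r → F r = 1) →
        ((List.range NN).map F).prod = ((List.range nn).map F).prod := by
      intro F nn NN hnN hF
      induction NN with
      | zero =>
        have h0 : nn = 0 := by omega
        simp [h0]
      | succ NN ihN =>
        rcases Nat.lt_or_ge nn (NN + 1) with hlt | hge
        · rw [List.range_succ, List.map_append, List.prod_append, ihN (by omega)]
          simp [hF NN (by omega)]
        · have h0 : nn = NN + 1 := by omega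
          simp [h0]
    have hnewton : ∀ j, z j =
        ((List.range (M + 2)).map fun r => az r ^ Nat.choose j r).prod := by
      intro j
      set z' : ℕ → Γm := fun j => ⟨z j, hzmem j⟩ with hz'def
      have h0 := newton_list j z'
      have h1 : z j = ((List.range (j + 1)).map fun r => az r ^ Nat.choose j r).prod := by
        have hval : z j = ((z' j : Γm) : K) := rfl
        rw [hval, h0]
        rw [Subgroup.val_list_prod, List.map_map]
        refine congrArg List.prod (List.map_congr_left fun r _ => ?_)
        show ((DOp^[r] z' 0 ^ Nat.choose j r : Γm) : K) = az r ^ Nat.choose j r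
        rw [SubgroupClass.coe_pow]
        congr 1
        rw [hvalseq z' r 0]
      rw [h1]
      rcases le_or_gt (j + 1) (M + 2) with hle | hlt
      · rw [hpad (fun r => az r ^ Nat.choose j r) (j + 1) (M + 2) hle
          (fun r hr => by
            have h0 : Nat.choose j r = 0 := Nat.choose_eq_zero_of_lt (by omega)
            simp [h0])]
      · rw [hpad (fun r => az r ^ Nat.choose j r) (M + 2) (j + 1) (by omega)
          (fun r hr => by simp [hvanish r hr])]
    -- z 0 = 1 and z 1 = 1
    have hP0 : ∀ j, j ≤ 1 → P j = 1 := by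
      intro j hj
      rw [hPdef]
      apply List.prod_eq_one
      intro x hx
      obtain ⟨p, hp, rfl⟩ := List.mem_map.mp hx
      rcases hLcond p hp with ⟨h2, _⟩ | h1
      · rw [Nat.choose_eq_zero_of_lt (by omega), pow_zero]
      · rw [h1, one_pow]
    have hz0 : z 0 = 1 := by
      rw [hzdef]
      simp [hP0 0 (by omega)]
    have hz1 : z 1 = 1 := by
      rw [hzdef]
      simp [hP0 1 (by omega)]
      done
    -- assemble the final list
    refine ⟨L ++ (List.range (M + 2)).map (fun r => (r, az r)), ?_, ?_⟩
    · intro p hp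
      rcases List.mem_append.mp hp with hp | hp
      · exact hLcond p hp
      · obtain ⟨r, hr, rfl⟩ := List.mem_map.mp hp
        rcases Nat.lt_or_ge r 2 with hr2 | hr2
        · right
          show az r = 1
          interval_cases r
          · exact hz0
          · show DOp z 0 = 1
            show (z 0)⁻¹ * z 1 = 1
            rw [hz0, hz1]; simp
        · left
          exact ⟨hr2, hza r⟩
    · intro j
      rw [List.map_append, List.prod_append]
      have hmm : ((List.range (M + 2)).map (fun r => (r, az r))).map
          (fun p => p.2 ^ Nat.choose j p.1)
          = (List.range (M + 2)).map (fun r => az r ^ Nat.choose j r) := by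
        rw [List.map_map]; rfl
      rw [hmm, ← hnewton j]
      show (a * b) ^ j = a ^ j * b ^ j * (P j * z j)
      rw [hzdef]
      group

end NilpMultAux

/-- `[R, cF]`: the iterated commutator subgroup, `[R, 0F] = R`,
`[R, (i+1)F] = ⁅[R, iF], F⁆`. -/
def iteratedCommutator {F : Type*} [Group F] (R : Subgroup F) : ℕ → Subgroup F
  | 0 => R
  | c + 1 => ⁅iteratedCommutator R c, (⊤ : Subgroup F)⁆

namespace NilpMultAux

open Subgroup Pointwise

variable {H : Type u} [Group H]

theorem itC_normal (N : Subgroup H) [hN : N.Normal] : ∀ s, (iteratedCommutator N s).Normal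
  | 0 => hN
  | s + 1 => @Subgroup.commutator_normal _ _ _ _ (itC_normal N s) inferInstance

theorem itC_succ_le (N : Subgroup H) [N.Normal] (s : ℕ) :
    iteratedCommutator N (s + 1) ≤ iteratedCommutator N s := by
  haveI := itC_normal N s
  exact Subgroup.commutator_le_left _ _

theorem itC_le_of_le (N : Subgroup H) [N.Normal] {s s' : ℕ} (h : s ≤ s') :
    iteratedCommutator N s' ≤ iteratedCommutator N s := by
  induction s' with
  | zero => simpa [Nat.le_zero.mp h] using le_refl _
  | succ m ih =>
    rcases Nat.lt_or_ge s (m+1) with hlt | hge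
    · exact (itC_succ_le N m).trans (ih (Nat.lt_succ_iff.mp hlt))
    · have : s = m + 1 := le_antisymm h hge
      simp [this]

theorem itC_mono {N N' : Subgroup H} (h : N ≤ N') (s : ℕ) :
    iteratedCommutator N s ≤ iteratedCommutator N' s := by
  induction s with
  | zero => exact h
  | succ m ih => exact Subgroup.commutator_mono ih le_rfl

theorem lcs_le_itC {N : Subgroup H} {k : ℕ} (hk : lowerCentralSeries H k ≤ N) (s : ℕ) :
    lowerCentralSeries H (k + s) ≤ iteratedCommutator N s := by
  induction s with
  | zero => exact hk
  | succ m ih =>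
    have : lowerCentralSeries H (k + (m + 1)) = ⁅lowerCentralSeries H (k + m), ⊤⁆ := rfl
    rw [this]
    exact Subgroup.commutator_mono ih le_rfl


/-- Ambient iterated commutator chain of a subgroup. -/
def ambChain (B : Subgroup H) : ℕ → Subgroup H
  | 0 => B
  | j + 1 => ⁅ambChain B j, B⁆

theorem lcs_subtype_le_ambChain (B : Subgroup H) (j : ℕ) :
    (lowerCentralSeries B j).map B.subtype ≤ ambChain B j := by
  induction j with
  | zero =>
    rw [lowerCentralSeries_zero, ← MonoidHom.range_eq_map, Subgroup.range_subtype]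
    exact le_rfl
  | succ j ih =>
    rw [lcs_succ, Subgroup.map_commutator]
    refine Subgroup.commutator_mono ih ?_
    rw [← MonoidHom.range_eq_map, Subgroup.range_subtype]

theorem ambChain_le_lcs {B : Subgroup H} {σ : ℕ} (hB : B ≤ lowerCentralSeries H σ) :
    ∀ j, ambChain B j ≤ lowerCentralSeries H ((j + 1) * σ + j)
  | 0 => by simpa [ambChain] using hB
  | j + 1 => by
    have h1 : ambChain B (j + 1) ≤ ⁅lowerCentralSeries H ((j + 1) * σ + j),
        lowerCentralSeries H σ⁆ :=
      Subgroup.commutator_mono (ambChain_le_lcs hB j) hB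
    refine h1.trans ((lcs_commutator_le_lcs _ _).trans (le_of_eq ?_))
    congr 1
    ring

theorem ambChain_le_lcs_sharp {B : Subgroup H} {t' : ℕ} (hB : B ≤ lowerCentralSeries H t')
    (h2 : ⁅B, B⁆ ≤ lowerCentralSeries H (2 * t' + 2)) :
    ∀ j, 1 ≤ j → ambChain B j ≤ lowerCentralSeries H ((j + 1) * (t' + 1))
  | 1, _ => by
    have e : (1 + 1) * (t' + 1) = 2 * t' + 2 := by ring
    rw [e]
    exact h2
  | j + 2, _ => by
    have h1 : ambChain B (j + 2) ≤ ⁅lowerCentralSeries H ((j + 2) * (t' + 1)),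
        lowerCentralSeries H t'⁆ :=
      Subgroup.commutator_mono (ambChain_le_lcs_sharp hB h2 (j + 1) (by omega)) hB
    refine h1.trans ((lcs_commutator_le_lcs _ _).trans (le_of_eq ?_))
    congr 1
    ring

theorem lcs_subtype_bot (B : Subgroup H) {m : ℕ} (hm : lowerCentralSeries H m = ⊥) :
    lowerCentralSeries B m = ⊥ := by
  have h1 := lowerCentralSeries_map_subtype_le B m
  rw [hm] at h1
  have h2 : (lowerCentralSeries B m).map B.subtype = ⊥ := le_bot_iff.mp h1
  rw [Subgroup.map_eq_bot_iff, Subgroup.ker_subtype, le_bot_iff] at h2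
  exact h2

theorem conj_pow_eq (q x : H) (n : ℕ) : (q * x * q⁻¹) ^ n = q * x ^ n * q⁻¹ := by
  induction n with
  | zero => simp
  | succ m ih => rw [pow_succ, pow_succ, ih]; group

/-- Sharp bound on commutators of pairs from `closure {p, q p⁻¹ q⁻¹}`. -/
theorem comm_pairs_bound {p q : H} {t' : ℕ} (hp : p ∈ lowerCentralSeries H t') :
    ⁅Subgroup.closure ({p, q * p⁻¹ * q⁻¹} : Set H),
      Subgroup.closure ({p, q * p⁻¹ * q⁻¹} : Set H)⁆ ≤ lowerCentralSeries H (2 * t' + 2) := by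
  set J := Subgroup.closure ({p} : Set H) ⊔ lowerCentralSeries H (t' + 1) with hJdef
  have hpJ : p ∈ J := Subgroup.mem_sup_left (Subgroup.subset_closure rfl)
  have hBJ : Subgroup.closure ({p, q * p⁻¹ * q⁻¹} : Set H) ≤ J := by
    rw [Subgroup.closure_le]
    intro x hx
    rcases hx with rfl | rfl
    · exact hpJ
    · have h1 : ⁅p, q⁆ ∈ lowerCentralSeries H (t' + 1) :=
        commutator_mem_commutator hp (Subgroup.mem_top q)
      have h2 : q * p⁻¹ * q⁻¹ = p⁻¹ * ⁅p, q⁆ := by group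
      rw [h2]
      exact mul_mem (inv_mem hpJ) (Subgroup.mem_sup_right h1)
  refine (Subgroup.commutator_mono hBJ hBJ).trans ?_
  rw [Subgroup.commutator_le]
  intro x hx y hy
  have hdec : ∀ x ∈ J, ∃ h ∈ Subgroup.closure ({p} : Set H),
      ∃ w ∈ lowerCentralSeries H (t' + 1), x = h * w := by
    intro x hx
    have hco : (x : H) ∈ (Subgroup.closure ({p} : Set H) : Set H) *
        (lowerCentralSeries H (t' + 1) : Set H) := by
      rw [← Subgroup.mul_normal]
      exact hx
    obtain ⟨h, hh, w, hw, hxe⟩ := hco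
    exact ⟨h, hh, w, hw, hxe.symm⟩
  obtain ⟨h, hh, w, hw, rfl⟩ := hdec x hx
  obtain ⟨h', hh', w', hw', rfl⟩ := hdec y hy
  have hht' : h ∈ lowerCentralSeries H t' := by
    have : Subgroup.closure ({p} : Set H) ≤ lowerCentralSeries H t' := by
      rw [Subgroup.closure_le]
      intro x hx
      rcases hx with rfl
      exact hp
    exact this hh
  have hht'2 : h' ∈ lowerCentralSeries H t' := by
    have : Subgroup.closure ({p} : Set H) ≤ lowerCentralSeries H t' := by
      rw [Subgroup.closure_le]
      intro x hx
      rcases hx with rfl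
      exact hp
    exact this hh'
  have hcomm1 : ⁅h, h'⁆ = 1 := by
    obtain ⟨m1, rfl⟩ := Subgroup.mem_closure_singleton.mp hh
    obtain ⟨m2, rfl⟩ := Subgroup.mem_closure_singleton.mp hh'
    exact commutatorElement_eq_one_iff_mul_comm.mpr (Commute.zpow_zpow (Commute.refl p) m1 m2)
  set M := lowerCentralSeries H (2 * t' + 2) with hMdef
  have hMn : M.Normal := inferInstanceAs (lowerCentralSeries H (2 * t' + 2)).Normal
  have c2 : ⁅h, w'⁆ ∈ M := by
    have := commutator_mem_commutator hht' hw'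
    have h3 := lcs_commutator_le_lcs (G := H) t' (t' + 1)
    have e : t' + (t' + 1) + 1 = 2 * t' + 2 := by omega
    rw [e] at h3
    exact h3 this
  have c3 : ⁅w, h'⁆ ∈ M := by
    have := commutator_mem_commutator hw hht'2
    have h3 := lcs_commutator_le_lcs (G := H) (t' + 1) t'
    have e : t' + 1 + t' + 1 = 2 * t' + 2 := by omega
    rw [e] at h3
    exact h3 this
  have c4 : ⁅w, w'⁆ ∈ M := by
    have := commutator_mem_commutator hw hw'
    have h3 := lcs_commutator_le_lcs (G := H) (t' + 1) (t' + 1)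
    refine (h3.trans (lowerCentralSeries_antitone (by omega))) this
  -- expand the commutator
  have key1 : ⁅h * w, h' * w'⁆ = h * ⁅w, h' * w'⁆ * h⁻¹ * ⁅h, h' * w'⁆ := by group
  have key2 : ⁅w, h' * w'⁆ = ⁅w, h'⁆ * (h' * ⁅w, w'⁆ * h'⁻¹) := by group
  have key3 : ⁅h, h' * w'⁆ = ⁅h, h'⁆ * (h' * ⁅h, w'⁆ * h'⁻¹) := by group
  rw [key1, key2, key3, hcomm1, one_mul]
  exact mul_mem (hMn.conj_mem _ (mul_mem c3 (hMn.conj_mem _ c4 h')) h)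
    (hMn.conj_mem _ c2 h')

section Main

variable (N : Subgroup H) [N.Normal] (k c n : ℕ)

/-- The core downward/upward induction: for `s ≤ t`, `s ≤ c`, any element of `γ_{t+1}(H)`
has its `n`-th power in `[N, sH]`. -/
theorem main_induction
    (hk : 1 ≤ k)
    (hcl : lowerCentralSeries H (k + c) = ⊥)
    (hNk : lowerCentralSeries H k ≤ N)
    (hNpow : ∀ x : H, x ^ n ∈ N)
    (hdvd : ∀ i, 2 ≤ i → i ≤ k → n ∣ Nat.choose n i) :
    ∀ s t, s ≤ t → s ≤ c → ∀ u ∈ lowerCentralSeries H t,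
      u ^ n ∈ iteratedCommutator N s := by
  have key : ∀ μ s t, s * (k + c + 2) + (k + c + 1 - t) ≤ μ → s ≤ t → s ≤ c →
      ∀ u ∈ lowerCentralSeries H t, u ^ n ∈ iteratedCommutator N s := by
    intro μ
    induction μ using Nat.strong_induction_on with
    | _ μ IH =>
      intro s t hμ hst hsc u hu
      haveI hNs : ∀ s', (iteratedCommutator N s').Normal := itC_normal N
      rcases Nat.eq_zero_or_pos s with rfl | hs
      · exact hNpow u
      rcases Nat.lt_or_ge t (k + c) with htlt | htge
      swap
      · have h1 : lowerCentralSeries H t ≤ lowerCentralSeries H (k + c) :=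
          lowerCentralSeries_antitone htge
        rw [hcl] at h1
        have hu1 : u = 1 := Subgroup.mem_bot.mp (h1 hu)
        rw [hu1, one_pow]
        exact Subgroup.one_mem _
      obtain ⟨t', rfl⟩ : ∃ t', t = t' + 1 := ⟨t - 1, by omega⟩
      obtain ⟨s', rfl⟩ : ∃ s', s = s' + 1 := ⟨s - 1, by omega⟩
      -- junk killing
      have hkill : ∀ (d : H) (W i : ℕ), 2 ≤ i → t' + 1 < W → d ∈ lowerCentralSeries H W →
          (W < s' + 1 + k → i ≤ k) → d ^ Nat.choose n i ∈ iteratedCommutator N (s' + 1) := by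
        intro d W i h2i hWt hdW harith
        rcases Nat.lt_or_ge W (s' + 1 + k) with hWlt | hWge
        · have hik : i ≤ k := harith hWlt
          obtain ⟨μ', hμ'⟩ := hdvd i h2i hik
          have hrec : d ^ n ∈ iteratedCommutator N (s' + 1) := by
            refine IH ((s' + 1) * (k + c + 2) + (k + c + 1 - W)) ?_ (s' + 1) W le_rfl
              (by omega) hsc d hdW
            have h9 : k + c + 1 - W < k + c + 1 - (t' + 1) := by omega
            omega
          rw [hμ', pow_mul]
          exact Subgroup.pow_mem _ hrec μ'
        · have h1 : d ∈ iteratedCommutator N (s' + 1) := by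
            have h2 : lowerCentralSeries H W ≤ lowerCentralSeries H (k + (s' + 1)) :=
              lowerCentralSeries_antitone (by omega)
            exact lcs_le_itC hNk (s' + 1) (h2 hdW)
          exact Subgroup.pow_mem _ h1 _
      have harith : ∀ i, 2 ≤ i → i * (t' + 1) < s' + 1 + k → i ≤ k := by
        intro i h2i hlt
        by_contra hik
        push_neg at hik
        have e2 : (k + 1) * (t' + 1) ≤ i * (t' + 1) := Nat.mul_le_mul_right _ (by omega)
        have e3 : k * (t' + 1) + (t' + 1) = (k + 1) * (t' + 1) := by ring
        have e4 : k ≤ k * (t' + 1) := Nat.le_mul_of_pos_right _ (by omega)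
        omega
      have hmul2 : ∀ i, 2 ≤ i → 2 * (t' + 1) ≤ i * (t' + 1) :=
        fun i h2i => Nat.mul_le_mul_right _ h2i
      -- closure induction
      have hucl : u ∈ Subgroup.closure { x | ∃ p ∈ lowerCentralSeries H t',
          ∃ q ∈ (⊤ : Subgroup H), ⁅p, q⁆ = x } := by
        rw [← Subgroup.commutator_def]
        exact hu
      clear hu
      induction hucl using Subgroup.closure_induction with
      | mem x hx =>
        obtain ⟨pp, hpp, qq, -, rfl⟩ := hx
        -- generator case
        set pc := qq * pp⁻¹ * qq⁻¹ with hpcdef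
        have hpc : pc ∈ lowerCentralSeries H t' :=
          (lowerCentralSeries_normal t').conj_mem _ (inv_mem hpp) qq
        set B := Subgroup.closure ({pp, pc} : Set H) with hBdef
        have hBle : B ≤ lowerCentralSeries H t' := by
          rw [hBdef, Subgroup.closure_le]
          intro x hx
          rcases hx with rfl | rfl
          · exact hpp
          · exact hpc
        have hBbot : lowerCentralSeries B (k + c) = ⊥ := lcs_subtype_bot B hcl
        have hppB : pp ∈ B := Subgroup.subset_closure (by left; rfl)
        have hpcB : pc ∈ B := Subgroup.subset_closure (by right; rfl)
        obtain ⟨Lst, hLcond, hLeq⟩ := hall_petrescu (k + c) B hBbot ⟨pp, hppB⟩ ⟨pc, hpcB⟩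
        have heq' : (pp * pc) ^ n = pp ^ n * pc ^ n *
            ((Lst.map fun p => ((p.2 : H) ^ Nat.choose n p.1))).prod := by
          have h0 := congrArg (fun x : B => (x : H)) (hLeq n)
          simpa [Subgroup.val_list_prod, List.map_map, Function.comp_def] using h0
        have hsharp : ⁅B, B⁆ ≤ lowerCentralSeries H (2 * t' + 2) := comm_pairs_bound hpp
        -- main term
        have hrec : pp ^ n ∈ iteratedCommutator N s' := by
          refine IH (s' * (k + c + 2) + (k + c + 1 - t')) ?_ s' t' le_rfl (by omega)
            (by omega) pp hpp
          have e4 : (s' + 1) * (k + c + 2) = s' * (k + c + 2) + (k + c + 2) := by ring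
          omega
        have hmainmem : pp ^ n * pc ^ n ∈ iteratedCommutator N (s' + 1) := by
          have hcomm : ⁅pp ^ n, qq⁆ ∈ ⁅iteratedCommutator N s', (⊤ : Subgroup H)⁆ :=
            commutator_mem_commutator hrec (Subgroup.mem_top qq)
          have hident : ⁅pp ^ n, qq⁆ = pp ^ n * pc ^ n := by
            rw [hpcdef, conj_pow_eq]
            group
          rw [hident] at hcomm
          exact hcomm
        have hjunk : ∀ x ∈ (Lst.map fun p => ((p.2 : H) ^ Nat.choose n p.1)),
            x ∈ iteratedCommutator N (s' + 1) := by
          intro x hx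
          obtain ⟨p, hp, rfl⟩ := List.mem_map.mp hx
          rcases hLcond p hp with ⟨h2i, hmem⟩ | h1
          · have hval : (p.2 : H) ∈ (lowerCentralSeries B (p.1 - 1)).map B.subtype :=
              Subgroup.mem_map_of_mem _ hmem
            have h3 : (p.2 : H) ∈ ambChain B (p.1 - 1) := lcs_subtype_le_ambChain B (p.1 - 1) hval
            have h4 : ambChain B (p.1 - 1) ≤ lowerCentralSeries H (p.1 * (t' + 1)) := by
              refine (ambChain_le_lcs_sharp hBle hsharp (p.1 - 1) (by omega)).trans
                (le_of_eq ?_)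
              congr 1
              have e : p.1 - 1 + 1 = p.1 := by omega
              rw [e]
            refine hkill (p.2 : H) (p.1 * (t' + 1)) p.1 h2i ?_ (h4 h3) (fun hWlt => harith p.1 h2i hWlt)
            have := hmul2 p.1 h2i
            omega
          · rw [h1]
            simp only [OneMemClass.coe_one, one_pow]
            exact Subgroup.one_mem _
        have hw : ⁅pp, qq⁆ = pp * pc := by
          rw [hpcdef]
          group
        rw [hw, heq']
        exact mul_mem hmainmem (Subgroup.list_prod_mem _ hjunk)
      | one =>
        rw [one_pow]
        exact Subgroup.one_mem _
      | mul x y hx hy px py =>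
        have hx' : x ∈ lowerCentralSeries H (t' + 1) := by
          rw [lcs_succ, Subgroup.commutator_def]
          exact hx
        have hy' : y ∈ lowerCentralSeries H (t' + 1) := by
          rw [lcs_succ, Subgroup.commutator_def]
          exact hy
        set B := Subgroup.closure ({x, y} : Set H) with hBdef
        have hBle : B ≤ lowerCentralSeries H (t' + 1) := by
          rw [hBdef, Subgroup.closure_le]
          intro w hw
          rcases hw with rfl | rfl
          · exact hx'
          · exact hy'
        have hBbot : lowerCentralSeries B (k + c) = ⊥ := lcs_subtype_bot B hcl
        have hxB : x ∈ B := Subgroup.subset_closure (by left; rfl)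
        have hyB : y ∈ B := Subgroup.subset_closure (by right; rfl)
        obtain ⟨Lst, hLcond, hLeq⟩ := hall_petrescu (k + c) B hBbot ⟨x, hxB⟩ ⟨y, hyB⟩
        have heq' : (x * y) ^ n = x ^ n * y ^ n *
            ((Lst.map fun p => ((p.2 : H) ^ Nat.choose n p.1))).prod := by
          have h0 := congrArg (fun w : B => (w : H)) (hLeq n)
          simpa [Subgroup.val_list_prod, List.map_map, Function.comp_def] using h0
        have hjunk : ∀ w ∈ (Lst.map fun p => ((p.2 : H) ^ Nat.choose n p.1)),
            w ∈ iteratedCommutator N (s' + 1) := by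
          intro w hw
          obtain ⟨p, hp, rfl⟩ := List.mem_map.mp hw
          rcases hLcond p hp with ⟨h2i, hmem⟩ | h1
          · have hval : (p.2 : H) ∈ (lowerCentralSeries B (p.1 - 1)).map B.subtype :=
              Subgroup.mem_map_of_mem _ hmem
            have h3 : (p.2 : H) ∈ ambChain B (p.1 - 1) := lcs_subtype_le_ambChain B (p.1 - 1) hval
            have h4 : ambChain B (p.1 - 1) ≤
                lowerCentralSeries H (p.1 * (t' + 1) + (p.1 - 1)) := by
              refine (ambChain_le_lcs hBle (p.1 - 1)).trans (le_of_eq ?_)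
              congr 1
              have e : p.1 - 1 + 1 = p.1 := by omega
              rw [e]
            refine hkill (p.2 : H) (p.1 * (t' + 1) + (p.1 - 1)) p.1 h2i ?_ (h4 h3) ?_
            · have := hmul2 p.1 h2i
              omega
            · intro hWlt
              refine harith p.1 h2i (by omega)
          · rw [h1]
            simp only [OneMemClass.coe_one, one_pow]
            exact Subgroup.one_mem _
        rw [heq']
        exact mul_mem (mul_mem px py) (Subgroup.list_prod_mem _ hjunk)
      | inv x hx px =>
        rw [inv_pow]
        exact inv_mem px
  intro s t hst hsc u hu
  exact key (s * (k + c + 2) + (k + c + 1 - t)) s t le_rfl hst hsc u hu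

theorem itC_map {H' : Type u} [Group H'] (f : H →* H') (hf : Function.Surjective f)
    (N : Subgroup H) : ∀ s, (iteratedCommutator N s).map f = iteratedCommutator (N.map f) s
  | 0 => rfl
  | s + 1 => by
    have e : iteratedCommutator N (s + 1) = ⁅iteratedCommutator N s, ⊤⁆ := rfl
    rw [e, Subgroup.map_commutator, itC_map f hf N s, map_top_of_surj f hf]
    rfl

end Main

end NilpMultAux

/-- Concluding claim of Remark 3.5: let `G = F/R` be a finite nilpotent group of
class at most `k` (`F` free, `R` normal of finite index, `γ_{k+1}(F) ≤ R`) all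
of whose prime divisors `p` satisfy `p ≥ k + 1`.  Then every
`g ∈ R ∩ γ_{c+1}(F)` satisfies `g^(exp(G)) ∈ [R, cF]`; that is, the exponent of
`M^(c)(G) = (R ∩ γ_{c+1}(F))/[R, cF]` divides `exp(G)`. -/
theorem nilpotentMultiplier_exponent_dvd_of_small_class {F : Type*} [Group F]
    [IsFreeGroup F] (R : Subgroup F) [R.Normal] [R.FiniteIndex] (k c : ℕ)
    (hk : 1 ≤ k) (hc : 1 ≤ c)
    (hnil : (⊤ : Subgroup F).lowerCentralSeries k ≤ R)
    (hprimes : ∀ p : ℕ, p.Prime → p ∣ Nat.card (F ⧸ R) → k + 1 ≤ p)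
    (g : F) (hg : g ∈ R ⊓ (⊤ : Subgroup F).lowerCentralSeries c) :
    g ^ Monoid.exponent (F ⧸ R) ∈ iteratedCommutator R c := by
  classical
  set n := Monoid.exponent (F ⧸ R) with hndef
  haveI hCnorm : (iteratedCommutator R c).Normal := NilpMultAux.itC_normal R c
  set π : F →* F ⧸ iteratedCommutator R c := QuotientGroup.mk' (iteratedCommutator R c) with hπdef
  have hsurj : Function.Surjective π := QuotientGroup.mk'_surjective _
  have hker : π.ker = iteratedCommutator R c := QuotientGroup.ker_mk' _
  set N : Subgroup (F ⧸ iteratedCommutator R c) := R.map π with hNdef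
  haveI hNnorm : N.Normal := Subgroup.Normal.map inferInstance π hsurj
  have hlcsF : NilpMultAux.lowerCentralSeries F (k + c) ≤ iteratedCommutator R c :=
    NilpMultAux.lcs_le_itC hnil c
  have hcl : NilpMultAux.lowerCentralSeries (F ⧸ iteratedCommutator R c) (k + c) = ⊥ := by
    rw [← NilpMultAux.lcs_map_eq π hsurj (k + c)]
    rw [Subgroup.map_eq_bot_iff, hker]
    exact hlcsF
  have hNk : NilpMultAux.lowerCentralSeries (F ⧸ iteratedCommutator R c) k ≤ N := by
    rw [← NilpMultAux.lcs_map_eq π hsurj k]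
    exact Subgroup.map_mono hnil
  have hNpow : ∀ x : F ⧸ iteratedCommutator R c, x ^ n ∈ N := by
    intro x
    obtain ⟨f, rfl⟩ := hsurj x
    have h1 : (QuotientGroup.mk' R f) ^ n = 1 := Monoid.pow_exponent_eq_one _
    have h2 : f ^ n ∈ R := by
      rw [← map_pow, ← MonoidHom.mem_ker, QuotientGroup.ker_mk'] at h1
      exact h1
    rw [← map_pow]
    exact Subgroup.mem_map_of_mem π h2
  have hdvd : ∀ i, 2 ≤ i → i ≤ k → n ∣ Nat.choose n i := by
    intro i h2 hik
    rcases Nat.eq_zero_or_pos n with hn0 | hn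
    · rw [hn0]
      have : Nat.choose 0 i = 0 := Nat.choose_eq_zero_of_lt (by omega)
      rw [this]
    · have hco : Nat.Coprime n i := by
        by_contra hg
        obtain ⟨p, hp, hpd⟩ := Nat.exists_prime_and_dvd hg
        have hpn : p ∣ n := hpd.trans (Nat.gcd_dvd_left n i)
        have hpi : p ∣ i := hpd.trans (Nat.gcd_dvd_right n i)
        have hcard : n ∣ Nat.card (F ⧸ R) := Group.exponent_dvd_nat_card
        have hk1 : k + 1 ≤ p := hprimes p hp (hpn.trans hcard)
        have hpile : p ≤ i := Nat.le_of_dvd (by omega) hpi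
        omega
      have hidgen : ∀ m j : ℕ, 1 ≤ m → 1 ≤ j →
          m * Nat.choose (m - 1) (j - 1) = Nat.choose m j * j := by
        intro m j hm hj
        obtain ⟨m', rfl⟩ : ∃ m', m = m' + 1 := ⟨m - 1, by omega⟩
        obtain ⟨j', rfl⟩ : ∃ j', j = j' + 1 := ⟨j - 1, by omega⟩
        simpa using Nat.add_one_mul_choose_eq m' j'
      have hid : n * Nat.choose (n - 1) (i - 1) = Nat.choose n i * i :=
        hidgen n i (by omega) (by omega)
      have hdvd2 : n ∣ Nat.choose n i * i := ⟨Nat.choose (n - 1) (i - 1), hid.symm⟩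
      exact Nat.Coprime.dvd_of_dvd_mul_right hco hdvd2
  have hmem : π g ∈ NilpMultAux.lowerCentralSeries (F ⧸ iteratedCommutator R c) c := by
    rw [← NilpMultAux.lcs_map_eq π hsurj c]
    exact Subgroup.mem_map_of_mem π hg.2
  have hmain := NilpMultAux.main_induction N k c n hk hcl hNk hNpow hdvd c c le_rfl le_rfl
    (π g) hmem
  have hT : iteratedCommutator N c = ⊥ := by
    rw [hNdef, ← NilpMultAux.itC_map π hsurj R c, Subgroup.map_eq_bot_iff, hker]
  rw [hT] at hmain
  have hone : π (g ^ n) = 1 := by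
    rw [map_pow]
    exact Subgroup.mem_bot.mp hmain
  rw [← MonoidHom.mem_ker, hker] at hone
  exact hone
end

section
/- Let p be a prime, e ≥ 1, k ≥ 1, c ≥ 1 integers. Let F be a free group and R a normal subgroup of F such that γ_{k+1}(F) ≤ R and x^(p^e) ∈ R for every x ∈ F. Then every outer-commutator value u ∈ F of weight exactly c + k satisfies u^(p^e) ∈ [R, cF]. -/
open scoped commutatorElement

/-- `IsOuterCommutatorOn l u` means that `u` is an outer-commutator value on
the list of entries `l` (of weight `l.length`). -/
inductive IsOuterCommutatorOn {F : Type*} [Group F] : List F → F → Prop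
  | base (x : F) : IsOuterCommutatorOn [x] x
  | comm {l₁ l₂ : List F} {u v : F} :
      IsOuterCommutatorOn l₁ u → IsOuterCommutatorOn l₂ v →
      IsOuterCommutatorOn (l₁ ++ l₂) ⁅u, v⁆

section Aux

variable {G : Type*} [Group G]

/-- Three subgroups lemma, inequality form. -/
theorem three_subgroups_le (H₁ H₂ H₃ N : Subgroup G) [N.Normal]
    (h1 : ⁅⁅H₂, H₃⁆, H₁⁆ ≤ N) (h2 : ⁅⁅H₃, H₁⁆, H₂⁆ ≤ N) : ⁅⁅H₁, H₂⁆, H₃⁆ ≤ N := by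
  let f := QuotientGroup.mk' N
  have key : ∀ A B C : Subgroup G, ⁅⁅A, B⁆, C⁆ ≤ N →
      ⁅⁅A.map f, B.map f⁆, C.map f⁆ = ⊥ := by
    intro A B C h
    rw [← Subgroup.map_commutator, ← Subgroup.map_commutator,
      Subgroup.map_eq_bot_iff, QuotientGroup.ker_mk']
    exact h
  have := Subgroup.commutator_commutator_eq_bot_of_rotate
    (key H₂ H₃ H₁ h1) (key H₃ H₁ H₂ h2)
  rw [← Subgroup.map_commutator, ← Subgroup.map_commutator,
    Subgroup.map_eq_bot_iff, QuotientGroup.ker_mk'] at this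
  exact this

instance iteratedCommutator_normal (R : Subgroup G) [R.Normal] (c : ℕ) :
    (iteratedCommutator R c).Normal := by
  induction c with
  | zero => assumption
  | succ n ih => exact @Subgroup.commutator_normal _ _ _ ⊤ ih _

theorem iteratedCommutator_mono {R S : Subgroup G} (h : R ≤ S) (c : ℕ) :
    iteratedCommutator R c ≤ iteratedCommutator S c := by
  induction c with
  | zero => exact h
  | succ n ih => exact Subgroup.commutator_mono ih le_rfl

theorem iteratedCommutator_antitone (R : Subgroup G) [R.Normal] :
    ∀ {c c' : ℕ}, c ≤ c' → iteratedCommutator R c' ≤ iteratedCommutator R c := by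
  intro c c' h
  induction h with
  | refl => exact le_rfl
  | step h ih => exact le_trans (Subgroup.commutator_le_left (iteratedCommutator R _) ⊤) ih

theorem iteratedCommutator_comm_lcs_le (R : Subgroup G) [R.Normal] :
    ∀ (j i : ℕ), ⁅iteratedCommutator R i, (⊤ : Subgroup G).lowerCentralSeries j⁆ ≤
      iteratedCommutator R (i + j + 1) := by
  intro j
  induction j with
  | zero =>
    intro i
    exact le_of_eq rfl
  | succ j ih =>
    intro i
    have h0 : (⊤ : Subgroup G).lowerCentralSeries (j + 1) = ⁅(⊤ : Subgroup G).lowerCentralSeries j, ⊤⁆ := rfl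
    rw [h0, Subgroup.commutator_comm]
    refine three_subgroups_le _ _ _ _ ?_ ?_
    · -- ⁅⁅⊤, R_i⁆, lcs j⁆ ≤ R_{i+j+2}
      rw [Subgroup.commutator_comm (⊤ : Subgroup G)]
      have : ⁅iteratedCommutator R (i + 1), (⊤ : Subgroup G).lowerCentralSeries j⁆ ≤
          iteratedCommutator R (i + 1 + j + 1) := ih (i + 1)
      calc ⁅⁅iteratedCommutator R i, ⊤⁆, (⊤ : Subgroup G).lowerCentralSeries j⁆
          = ⁅iteratedCommutator R (i + 1), (⊤ : Subgroup G).lowerCentralSeries j⁆ := rfl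
        _ ≤ iteratedCommutator R (i + 1 + j + 1) := ih (i + 1)
        _ ≤ iteratedCommutator R (i + (j + 1) + 1) := by
            apply iteratedCommutator_antitone; omega
    · -- ⁅⁅R_i, lcs j⁆, ⊤⁆ ≤ R_{i+j+2}
      calc ⁅⁅iteratedCommutator R i, (⊤ : Subgroup G).lowerCentralSeries j⁆, (⊤ : Subgroup G)⁆
          ≤ ⁅iteratedCommutator R (i + j + 1), (⊤ : Subgroup G)⁆ :=
            Subgroup.commutator_mono (ih i) le_rfl
        _ = iteratedCommutator R (i + j + 2) := rfl
        _ ≤ iteratedCommutator R (i + (j + 1) + 1) := by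
            apply iteratedCommutator_antitone; omega

theorem iteratedCommutator_top_eq (c : ℕ) :
    iteratedCommutator (⊤ : Subgroup G) c = (⊤ : Subgroup G).lowerCentralSeries c := by
  induction c with
  | zero => rfl
  | succ n ih => show ⁅iteratedCommutator (⊤ : Subgroup G) n, ⊤⁆ = _; rw [ih]; rfl

theorem lcs_comm_lcs_le (m n : ℕ) :
    ⁅(⊤ : Subgroup G).lowerCentralSeries m, (⊤ : Subgroup G).lowerCentralSeries n⁆ ≤ (⊤ : Subgroup G).lowerCentralSeries (m + n + 1) := by
  rw [← iteratedCommutator_top_eq m, ← iteratedCommutator_top_eq (m + n + 1)]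
  exact iteratedCommutator_comm_lcs_le ⊤ n m

theorem IsOuterCommutatorOn.length_pos {l : List G} {u : G}
    (h : IsOuterCommutatorOn l u) : 1 ≤ l.length := by
  induction h with
  | base x => simp
  | comm h1 h2 ih1 ih2 => simp; omega

theorem IsOuterCommutatorOn.mem_lcs {l : List G} {u : G}
    (h : IsOuterCommutatorOn l u) : u ∈ (⊤ : Subgroup G).lowerCentralSeries (l.length - 1) := by
  induction h with
  | base x => simp
  | @comm l₁ l₂ u v h1 h2 ih1 ih2 =>
    have := Subgroup.commutator_mem_commutator ih1 ih2
    have hle := lcs_comm_lcs_le (G := G) (l₁.length - 1) (l₂.length - 1)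
    have h1' := h1.length_pos
    have h2' := h2.length_pos
    have he : l₁.length - 1 + (l₂.length - 1) + 1 = (l₁ ++ l₂).length - 1 := by
      simp; omega
    rw [he] at hle
    exact hle this

theorem commutator_pow_of_central {v w : G}
    (hcen : ∀ x : G, Commute ⁅v, w⁆ x) (n : ℕ) : ⁅v ^ n, w⁆ = ⁅v, w⁆ ^ n := by
  induction n with
  | zero => simp
  | succ n ih =>
    have key : ⁅v * v ^ n, w⁆ = v * ⁅v ^ n, w⁆ * v⁻¹ * ⁅v, w⁆ := by group
    have : v ^ (n + 1) = v * v ^ n := by rw [pow_succ']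
    rw [this, key, ih, ← ((hcen v).pow_left n).eq, mul_inv_cancel_right, ← pow_succ]

end Aux

/-- Base case `w = c + k` of the inverse induction in the proof of Lemma 3.1:
if `γ_{k+1}(F) ≤ R` and `x^(p^e) ∈ R` for all `x ∈ F`, then every
outer-commutator value `u` of weight exactly `c + k` satisfies
`u^(p^e) ∈ [R, cF]`. -/
theorem outerCommutator_pow_mem_of_weight_eq {F : Type*} [Group F]
    [IsFreeGroup F] (R : Subgroup F) [R.Normal] (p e k c : ℕ) (hp : p.Prime)
    (he : 1 ≤ e) (hk : 1 ≤ k) (hc : 1 ≤ c)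
    (hnil : (⊤ : Subgroup F).lowerCentralSeries k ≤ R)
    (hexp : ∀ x : F, x ^ (p ^ e) ∈ R)
    (l : List F) (u : F) (hu : IsOuterCommutatorOn l u)
    (hw : l.length = c + k) :
    u ^ (p ^ e) ∈ iteratedCommutator R c := by
  -- `γ_{k+1+c} ≤ [R, cF]`
  have hlcs_le : ∀ c' : ℕ, (⊤ : Subgroup F).lowerCentralSeries (k + c') ≤ iteratedCommutator R c' := by
    intro c'
    induction c' with
    | zero => exact hnil
    | succ n ih =>
      have : (⊤ : Subgroup F).lowerCentralSeries (k + (n + 1)) = ⁅(⊤ : Subgroup F).lowerCentralSeries (k + n), ⊤⁆ := rfl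
      rw [this]
      exact Subgroup.commutator_mono ih le_rfl
  clear hc
  induction hu generalizing c with
  | base x =>
    simp only [List.length_singleton] at hw
    have hc0 : c = 0 := by omega
    subst hc0
    exact hexp x
  | @comm l₁ l₂ v w h1 h2 ih1 ih2 =>
    set a := l₁.length with ha
    set b := l₂.length with hb
    have ha1 : 1 ≤ a := h1.length_pos
    have hb1 : 1 ≤ b := h2.length_pos
    have hab : a + b = c + k := by simpa using hw
    -- v ^ (p^e) ∈ [R, (a-k)F]
    have hv : v ^ (p ^ e) ∈ iteratedCommutator R (a - k) := by
      by_cases hak : k ≤ a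
      · exact ih1 (a - k) (by omega)
      · have : a - k = 0 := by omega
        rw [this]
        exact hexp v
    -- ⁅v^(p^e), w⁆ ∈ [R, cF]
    have hw2 : w ∈ (⊤ : Subgroup F).lowerCentralSeries (b - 1) := h2.mem_lcs
    have hvw : ⁅v ^ (p ^ e), w⁆ ∈ iteratedCommutator R c := by
      have h3 : ⁅v ^ (p ^ e), w⁆ ∈ ⁅iteratedCommutator R (a - k), (⊤ : Subgroup F).lowerCentralSeries (b - 1)⁆ :=
        Subgroup.commutator_mem_commutator hv hw2
      have h4 := iteratedCommutator_comm_lcs_le R (b - 1) (a - k)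
      have h5 : c ≤ a - k + (b - 1) + 1 := by omega
      exact iteratedCommutator_antitone R h5 (h4 h3)
    -- ⁅v, w⁆ is central modulo M := [R, cF]
    set M := iteratedCommutator R c with hM
    have hcent : ∀ x : F, ⁅(⁅v, w⁆), x⁆ ∈ M := by
      intro x
      have huin : ⁅v, w⁆ ∈ (⊤ : Subgroup F).lowerCentralSeries (c + k - 1) := by
        have := (h1.comm h2).mem_lcs
        rwa [show (l₁ ++ l₂).length - 1 = c + k - 1 by simp [hw]] at this
      have : ⁅(⁅v, w⁆), x⁆ ∈ ⁅(⊤ : Subgroup F).lowerCentralSeries (c + k - 1), (⊤ : Subgroup F)⁆ :=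
        Subgroup.commutator_mem_commutator huin (Subgroup.mem_top x)
      have heq : ⁅(⊤ : Subgroup F).lowerCentralSeries (c + k - 1), (⊤ : Subgroup F)⁆ =
          (⊤ : Subgroup F).lowerCentralSeries (c + k) := by
        have : c + k = (c + k - 1) + 1 := by omega
        rw [this]; rfl
      rw [heq] at this
      exact hlcs_le c (by rwa [show k + c = c + k by omega])
    -- pass to the quotient
    let f := QuotientGroup.mk' M
    have hker : f.ker = M := QuotientGroup.ker_mk' M
    have hcomm : ∀ y : F ⧸ M, Commute ⁅f v, f w⁆ y := by
      intro y
      obtain ⟨x, rfl⟩ := QuotientGroup.mk'_surjective M y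
      have : f ⁅(⁅v, w⁆), x⁆ = 1 := by
        rw [← hker] at hcent
        exact hcent x
      rw [map_commutatorElement] at this
      exact commutatorElement_eq_one_iff_commute.mp this
    have hq : f (⁅v, w⁆ ^ (p ^ e)) = f ⁅v ^ (p ^ e), w⁆ := by
      rw [map_pow, map_commutatorElement, map_commutatorElement, map_pow,
        commutator_pow_of_central hcomm]
    have : f (⁅v, w⁆ ^ (p ^ e)) = 1 := by
      rw [hq]
      rw [← hker] at hvw
      exact hvw
    rw [← hker]
    exact this
end
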